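/- arXiv:1412.5374 — 7 statements merged into one kernel-verified Lean document; each statement's English description precedes it below -/
import Mathlib

section
/- Let (X,Y) be finitely supported discrete random variables with joint pmf p(x,y) and marginals p(x), p(y), with p(x)>0 and p(y)>0 for all x∈𝒳, y∈𝒴. Define the matrix B ∈ ℝ^{|𝒳|×|𝒴|} by B_{xy} = p(x,y)/√(p(x)p(y)) − √(p(x)p(y)). Then the Hirschfeld–Gebelein–Rényi maximal correlation ρ_m(X;Y) equals the spectral (operator) norm ‖B‖ of B. -/
open BigOperators Finset
open scoped Classical

/-- Hirschfeld–Gebelein–Rényi maximal correlation of a joint pmf `p` on `X × Y`: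
the supremum of `E[f(X) g(Y)]` over zero-mean, unit-second-moment `f`, `g`
(`sSup ∅ = 0` if no such functions exist). -/
noncomputable def maxCorr {X Y : Type*} [Fintype X] [Fintype Y] (p : X → Y → ℝ) : ℝ :=
  sSup {r : ℝ | ∃ f : X → ℝ, ∃ g : Y → ℝ,
    (∑ x, ∑ y, p x y * f x) = 0 ∧
    (∑ x, ∑ y, p x y * g y) = 0 ∧
    (∑ x, ∑ y, p x y * (f x) ^ 2) = 1 ∧
    (∑ x, ∑ y, p x y * (g y) ^ 2) = 1 ∧
    r = ∑ x, ∑ y, p x y * f x * g y}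

/-- Spectral (operator) norm of a real matrix. -/
noncomputable def specNorm {X Y : Type*} [Fintype X] [Fintype Y] (B : Matrix X Y ℝ) : ℝ :=
  sSup {r : ℝ | ∃ v : Y → ℝ, (∑ y, (v y) ^ 2) = 1 ∧
    r = Real.sqrt (∑ x, (B.mulVec v x) ^ 2)}

set_option maxHeartbeats 1000000 in
theorem stmt0 {X Y : Type*} [Fintype X] [Fintype Y]
    (p : X → Y → ℝ) (hp : ∀ x y, 0 ≤ p x y) (hsum : ∑ x, ∑ y, p x y = 1)
    (hX : ∀ x, 0 < ∑ y, p x y) (hY : ∀ y, 0 < ∑ x, p x y) :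
    maxCorr p = specNorm (Matrix.of fun x y =>
      p x y / Real.sqrt ((∑ y', p x y') * (∑ x', p x' y)) -
      Real.sqrt ((∑ y', p x y') * (∑ x', p x' y))) := by
  classical
  set B : Matrix X Y ℝ := Matrix.of fun x y =>
      p x y / Real.sqrt ((∑ y', p x y') * (∑ x', p x' y)) -
      Real.sqrt ((∑ y', p x y') * (∑ x', p x' y)) with hBdef
  -- abbreviations
  set sx : X → ℝ := fun x => Real.sqrt (∑ y', p x y') with hsxdef
  set sy : Y → ℝ := fun y => Real.sqrt (∑ x', p x' y) with hsydef
  have hsx : ∀ x, 0 < sx x := fun x => Real.sqrt_pos.mpr (hX x)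
  have hsy : ∀ y, 0 < sy y := fun y => Real.sqrt_pos.mpr (hY y)
  have hsx2 : ∀ x, sx x ^ 2 = ∑ y', p x y' := fun x => Real.sq_sqrt (hX x).le
  have hsy2 : ∀ y, sy y ^ 2 = ∑ x', p x' y := fun y => Real.sq_sqrt (hY y).le
  have hpy1 : (∑ y, ∑ x, p x y) = 1 := by rw [Finset.sum_comm]; exact hsum
  have hBxy : ∀ x y, B x y = p x y / (sx x * sy y) - sx x * sy y := by
    intro x y
    rw [hBdef]
    simp only [Matrix.of_apply]
    rw [Real.sqrt_mul (hX x).le]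
  have hmul : ∀ (v : Y → ℝ) x, B.mulVec v x = ∑ y, B x y * v y := by
    intro v x; simp [Matrix.mulVec, dotProduct]
  -- marginal rewrites
  have hA : ∀ f : X → ℝ, (∑ x, ∑ y, p x y * f x) = ∑ x, (∑ y', p x y') * f x := by
    intro f; exact Finset.sum_congr rfl fun x _ => by rw [← Finset.sum_mul]
  have hB' : ∀ g : Y → ℝ, (∑ x, ∑ y, p x y * g y) = ∑ y, (∑ x', p x' y) * g y := by
    intro g; rw [Finset.sum_comm]
    exact Finset.sum_congr rfl fun y _ => by rw [← Finset.sum_mul]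
  -- Fact C : B * w = 0
  have factC : ∀ x, (∑ y, B x y * sy y) = 0 := by
    intro x
    have : ∀ y, B x y * sy y = p x y / sx x - sx x * (∑ x', p x' y) := by
      intro y
      rw [hBxy, ← hsy2 y]
      field_simp [(hsx x).ne', (hsy y).ne']
    rw [Finset.sum_congr rfl fun y _ => this y, Finset.sum_sub_distrib,
      ← Finset.sum_div, ← Finset.mul_sum, hpy1, Real.div_sqrt]
    simp [hsxdef]
  -- Fact B : wᵀ B = 0
  have factB : ∀ y, (∑ x, sx x * B x y) = 0 := by
    intro y
    have : ∀ x, sx x * B x y = p x y / sy y - sy y * (∑ y', p x y') := by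
      intro x
      rw [hBxy, ← hsx2 x]
      field_simp [(hsx x).ne', (hsy y).ne']
    rw [Finset.sum_congr rfl fun x _ => this x, Finset.sum_sub_distrib,
      ← Finset.sum_div, ← Finset.mul_sum, hsum, Real.div_sqrt]
    simp [hsydef]
  -- Fact A : for mean-zero g, B (sy * g) = (∑ p g)/sx
  have factA : ∀ g : Y → ℝ, (∑ y, (∑ x', p x' y) * g y) = 0 →
      ∀ x, B.mulVec (fun y => sy y * g y) x = (∑ y, p x y * g y) / sx x := by
    intro g hg0 x
    rw [hmul]
    have : ∀ y, B x y * (sy y * g y)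
        = p x y * g y / sx x - sx x * ((∑ x', p x' y) * g y) := by
      intro y
      rw [hBxy, ← hsy2 y]
      field_simp [(hsx x).ne', (hsy y).ne']
    rw [Finset.sum_congr rfl fun y _ => this y, Finset.sum_sub_distrib,
      ← Finset.sum_div, ← Finset.mul_sum, hg0]
    simp

  have hXne : Nonempty X := by
    rcases isEmpty_or_nonempty X with h | h
    · rw [Finset.univ_eq_empty, Finset.sum_empty] at hsum; norm_num at hsum
    · exact h
  have hYne : Nonempty Y := by
    rcases isEmpty_or_nonempty Y with h | h
    · obtain ⟨x⟩ := hXne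
      have hx := hX x
      rw [Finset.univ_eq_empty, Finset.sum_empty] at hx
      norm_num at hx
    · exact h
  unfold maxCorr specNorm
  set S1 : Set ℝ := {r : ℝ | ∃ f : X → ℝ, ∃ g : Y → ℝ,
    (∑ x, ∑ y, p x y * f x) = 0 ∧
    (∑ x, ∑ y, p x y * g y) = 0 ∧
    (∑ x, ∑ y, p x y * (f x) ^ 2) = 1 ∧
    (∑ x, ∑ y, p x y * (g y) ^ 2) = 1 ∧
    r = ∑ x, ∑ y, p x y * f x * g y} with hS1def
  set S2 : Set ℝ := {r : ℝ | ∃ v : Y → ℝ, (∑ y, (v y) ^ 2) = 1 ∧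
    r = Real.sqrt (∑ x, (B.mulVec v x) ^ 2)} with hS2def
  have hbdd2 : BddAbove S2 := by
    refine ⟨Real.sqrt (∑ x, ∑ y, (B x y)^2), ?_⟩
    rintro r ⟨v, hv, rfl⟩
    apply Real.sqrt_le_sqrt
    apply Finset.sum_le_sum
    intro x _
    rw [hmul]
    calc (∑ y, B x y * v y)^2 ≤ (∑ y, (B x y)^2) * (∑ y, (v y)^2) :=
        Finset.sum_mul_sq_le_sq_mul_sq _ _ _
      _ = ∑ y, (B x y)^2 := by rw [hv, mul_one]
  have hbdd1 : BddAbove S1 := by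
    refine ⟨1, ?_⟩
    rintro r ⟨f, g, h1, h2, h3, h4, h5⟩
    have key : r = ∑ z : X × Y, (Real.sqrt (p z.1 z.2) * f z.1) * (Real.sqrt (p z.1 z.2) * g z.2) := by
      rw [h5, Fintype.sum_prod_type]
      refine Finset.sum_congr rfl fun x _ => Finset.sum_congr rfl fun y _ => ?_
      linear_combination (-(f x * g y)) * Real.sq_sqrt (hp x y)
    rw [key]
    have e1 : (∑ z : X × Y, (Real.sqrt (p z.1 z.2) * f z.1)^2) = 1 := by
      rw [Fintype.sum_prod_type, ← h3]
      refine Finset.sum_congr rfl fun x _ => Finset.sum_congr rfl fun y _ => ?_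
      rw [mul_pow, Real.sq_sqrt (hp x y)]
    have e2 : (∑ z : X × Y, (Real.sqrt (p z.1 z.2) * g z.2)^2) = 1 := by
      rw [Fintype.sum_prod_type, ← h4]
      refine Finset.sum_congr rfl fun x _ => Finset.sum_congr rfl fun y _ => ?_
      rw [mul_pow, Real.sq_sqrt (hp x y)]
    calc _ ≤ Real.sqrt (∑ z : X × Y, (Real.sqrt (p z.1 z.2) * f z.1)^2) *
            Real.sqrt (∑ z : X × Y, (Real.sqrt (p z.1 z.2) * g z.2)^2) :=
          Real.sum_mul_le_sqrt_mul_sqrt _ _ _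
      _ = 1 := by rw [e1, e2, Real.sqrt_one, mul_one]
  have hS1nn : 0 ≤ sSup S1 := by
    rcases Set.eq_empty_or_nonempty S1 with he | hne
    · rw [he, Real.sSup_empty]
    · obtain ⟨r, f, g, h1, h2, h3, h4, h5⟩ := hne
      have hmem : r ∈ S1 := ⟨f, g, h1, h2, h3, h4, h5⟩
      have hmem' : -r ∈ S1 := by
        refine ⟨fun x => -f x, g, ?_, h2, ?_, h4, ?_⟩
        · rw [show (∑ x, ∑ y, p x y * -f x) = -(∑ x, ∑ y, p x y * f x) by
            rw [← Finset.sum_neg_distrib]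
            exact Finset.sum_congr rfl fun x _ => by rw [← Finset.sum_neg_distrib]; exact Finset.sum_congr rfl fun y _ => by ring, h1, neg_zero]
        · rw [show (∑ x, ∑ y, p x y * (-f x)^2) = (∑ x, ∑ y, p x y * f x^2) from
            Finset.sum_congr rfl fun x _ => Finset.sum_congr rfl fun y _ => by ring]
          exact h3
        · rw [show (∑ x, ∑ y, p x y * -f x * g y) = -(∑ x, ∑ y, p x y * f x * g y) by
            rw [← Finset.sum_neg_distrib]
            exact Finset.sum_congr rfl fun x _ => by rw [← Finset.sum_neg_distrib]; exact Finset.sum_congr rfl fun y _ => by ring, ← h5]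
      have l1 := le_csSup hbdd1 hmem
      have l2 := le_csSup hbdd1 hmem'
      linarith
  have dir1 : sSup S1 ≤ sSup S2 := by
    have h0 : 0 ≤ sSup S2 := by
      obtain ⟨y0⟩ := hYne
      have hmem : Real.sqrt (∑ x, (B.mulVec (fun y => if y = y0 then (1:ℝ) else 0) x)^2) ∈ S2 :=
        ⟨_, by simp, rfl⟩
      exact le_trans (Real.sqrt_nonneg _) (le_csSup hbdd2 hmem)
    refine Real.sSup_le ?_ h0
    rintro r ⟨f, g, h1, h2, h3, h4, h5⟩
    set ψ : Y → ℝ := fun y => sy y * g y with hψdef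
    have hg0 : (∑ y, (∑ x', p x' y) * g y) = 0 := by rw [← hB' g]; exact h2
    have hψ2 : (∑ y, ψ y ^ 2) = 1 := by
      have e : ∀ y, ψ y ^2 = (∑ x', p x' y) * g y ^2 := fun y => by
        simp only [hψdef]; rw [mul_pow, hsy2]
      rw [Finset.sum_congr rfl fun y _ => e y, ← hB' (fun y => g y ^2)]
      exact h4
    have hkey := factA g hg0
    have hval : r = ∑ x, (sx x * f x) * (B.mulVec ψ x) := by
      rw [h5]
      refine Finset.sum_congr rfl fun x _ => ?_
      have hx0 := (hsx x).ne'
      have e : sx x * f x * ((∑ y, p x y * g y) / sx x) = f x * (∑ y, p x y * g y) := by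
        field_simp
      rw [hkey x, e, Finset.mul_sum]
      exact Finset.sum_congr rfl fun y _ => by ring
    have hfn : (∑ x, (sx x * f x)^2) = 1 := by
      have e : ∀ x, (sx x * f x)^2 = (∑ y', p x y') * f x ^2 := fun x => by rw [mul_pow, hsx2]
      rw [Finset.sum_congr rfl fun x _ => e x, ← hA (fun x => f x ^2)]
      exact h3
    have hCS : r ≤ Real.sqrt (∑ x, (B.mulVec ψ x)^2) := by
      rw [hval]
      calc _ ≤ Real.sqrt (∑ x, (sx x * f x)^2) * Real.sqrt (∑ x, (B.mulVec ψ x)^2) :=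
          Real.sum_mul_le_sqrt_mul_sqrt _ _ _
        _ = _ := by rw [hfn, Real.sqrt_one, one_mul]
    exact le_trans hCS (le_csSup hbdd2 ⟨ψ, hψ2, rfl⟩)
  have dir2 : sSup S2 ≤ sSup S1 := by
    refine Real.sSup_le ?_ hS1nn
    rintro r ⟨v, hv, rfl⟩
    rcases eq_or_lt_of_le (Real.sqrt_nonneg (∑ x, (B.mulVec v x)^2)) with h0 | hrpos
    · rw [← h0]; exact hS1nn
    · set r := Real.sqrt (∑ x, (B.mulVec v x)^2) with hrdef
      have hS : 0 < ∑ x, (B.mulVec v x)^2 := Real.sqrt_pos.mp hrpos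
      have hr2 : r^2 = ∑ x, (B.mulVec v x)^2 := Real.sq_sqrt hS.le
      set c : ℝ := ∑ y, sy y * v y with hcdef
      set ψ' : Y → ℝ := fun y => v y - c * sy y with hψ'def
      have hsy21 : (∑ y, sy y ^ 2) = 1 := by
        rw [Finset.sum_congr rfl fun y _ => hsy2 y]; exact hpy1
      have hψ'B : ∀ x, (∑ y, B x y * ψ' y) = B.mulVec v x := by
        intro x
        have e : ∀ y, B x y * ψ' y = B x y * v y - c * (B x y * sy y) := fun y => by
          simp only [hψ'def]; ring
        rw [Finset.sum_congr rfl fun y _ => e y, Finset.sum_sub_distrib, ← Finset.mul_sum,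
          factC, mul_zero, sub_zero, hmul]
      have hψ'sq : (∑ y, ψ' y ^2) = 1 - c^2 := by
        have e : ∀ y, ψ' y^2 = v y^2 - (2*c) * (sy y * v y) + c^2 * sy y^2 := fun y => by
          simp only [hψ'def]; ring
        rw [Finset.sum_congr rfl fun y _ => e y, Finset.sum_add_distrib, Finset.sum_sub_distrib,
          ← Finset.mul_sum, ← Finset.mul_sum, hv, hsy21, ← hcdef]
        ring
      have hψ'pos : 0 < ∑ y, ψ' y ^2 := by
        rcases (Finset.sum_nonneg (fun y _ => sq_nonneg (ψ' y))).lt_or_eq with h | h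
        · exact h
        · exfalso
          have hzero : ∀ y ∈ Finset.univ, ψ' y ^2 = 0 :=
            (Finset.sum_eq_zero_iff_of_nonneg (fun y _ => sq_nonneg _)).mp h.symm
          have hv0 : ∀ x, B.mulVec v x = 0 := by
            intro x
            rw [← hψ'B x]
            refine Finset.sum_eq_zero fun y _ => ?_
            have hy := pow_eq_zero_iff (n := 2) (by norm_num) |>.mp (hzero y (Finset.mem_univ y))
            rw [hy, mul_zero]
          have : (∑ x, (B.mulVec v x)^2) = 0 :=
            Finset.sum_eq_zero fun x _ => by rw [hv0 x]; ring
          exact absurd this hS.ne'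
      set s : ℝ := Real.sqrt (∑ y, ψ' y ^2) with hsdef
      have hs : 0 < s := Real.sqrt_pos.mpr hψ'pos
      have hs2 : s^2 = ∑ y, ψ' y^2 := Real.sq_sqrt hψ'pos.le
      have hs1 : s ≤ 1 := Real.sqrt_le_one.mpr (by rw [hψ'sq]; nlinarith [sq_nonneg c])
      have hwψ' : (∑ y, sy y * ψ' y) = 0 := by
        have e : ∀ y, sy y * ψ' y = sy y * v y - c * sy y^2 := fun y => by
          simp only [hψ'def]; ring
        rw [Finset.sum_congr rfl fun y _ => e y, Finset.sum_sub_distrib, ← Finset.mul_sum,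
          hsy21, ← hcdef]
        ring
      set g : Y → ℝ := fun y => ψ' y / (s * sy y) with hgdef
      set f : X → ℝ := fun x => B.mulVec v x / (r * sx x) with hfdef
      have c2 : (∑ x, ∑ y, p x y * g y) = 0 := by
        rw [hB' g]
        have e : ∀ y, (∑ x', p x' y) * g y = (sy y * ψ' y) / s := by
          intro y
          have hy0 := (hsy y).ne'
          have hs0 := hs.ne'
          simp only [hgdef]
          rw [← hsy2 y]
          field_simp
        rw [Finset.sum_congr rfl fun y _ => e y, ← Finset.sum_div, hwψ', zero_div]
      have c1 : (∑ x, ∑ y, p x y * f x) = 0 := by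
        rw [hA f]
        have e : ∀ x, (∑ y', p x y') * f x = (sx x * B.mulVec v x) / r := by
          intro x; have hx0 := (hsx x).ne'; have hr0 := hrpos.ne'; simp only [hfdef]; rw [← hsx2 x]; field_simp
        rw [Finset.sum_congr rfl fun x _ => e x, ← Finset.sum_div]
        have hz : (∑ x, sx x * B.mulVec v x) = 0 := by
          rw [Finset.sum_congr rfl fun x _ => by rw [hmul v x, Finset.mul_sum]]
          rw [Finset.sum_comm]
          refine Finset.sum_eq_zero fun y _ => ?_
          rw [Finset.sum_congr rfl fun x _ =>
            (by ring : sx x * (B x y * v y) = (sx x * B x y) * v y), ← Finset.sum_mul,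
            factB, zero_mul]
        rw [hz, zero_div]
      have c3 : (∑ x, ∑ y, p x y * f x ^2) = 1 := by
        rw [hA (fun x => f x^2)]
        have e : ∀ x, (∑ y', p x y') * f x^2 = (B.mulVec v x)^2 / r^2 := by
          intro x; have hx0 := (hsx x).ne'; have hr0 := hrpos.ne'; simp only [hfdef]; rw [← hsx2 x]
          field_simp
        rw [Finset.sum_congr rfl fun x _ => e x, ← Finset.sum_div, ← hr2,
          div_self (by positivity)]
      have c4 : (∑ x, ∑ y, p x y * g y^2) = 1 := by
        rw [hB' (fun y => g y^2)]
        have e : ∀ y, (∑ x', p x' y) * g y^2 = ψ' y^2 / s^2 := by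
          intro y; have hy0 := (hsy y).ne'; have hs0 := hs.ne'; simp only [hgdef]; rw [← hsy2 y]; field_simp
        rw [Finset.sum_congr rfl fun y _ => e y, ← Finset.sum_div, ← hs2,
          div_self (by positivity)]
      have hg0' : (∑ y, (∑ x', p x' y) * g y) = 0 := by rw [← hB' g]; exact c2
      have hψeq : (fun y => sy y * g y) = fun y => ψ' y / s := by
        funext y; have hy0 := (hsy y).ne'; have hs0 := hs.ne'; simp only [hgdef]
        field_simp
      have hBg : ∀ x, B.mulVec (fun y => sy y * g y) x = B.mulVec v x / s := by
        intro x
        rw [hψeq, hmul]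
        rw [Finset.sum_congr rfl fun y _ =>
          (by ring : B x y * (ψ' y / s) = B x y * ψ' y / s), ← Finset.sum_div, hψ'B x]
      have hx : ∀ x, (∑ y, p x y * g y) = sx x * (B.mulVec v x / s) := by
        intro x
        have h' := factA g hg0' x
        rw [hBg x, eq_div_iff (hsx x).ne'] at h'
        rw [← h']; ring
      have hval : (∑ x, ∑ y, p x y * f x * g y) = r / s := by
        calc (∑ x, ∑ y, p x y * f x * g y)
            = ∑ x, f x * (∑ y, p x y * g y) := by
              refine Finset.sum_congr rfl fun x _ => ?_
              rw [Finset.mul_sum]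
              exact Finset.sum_congr rfl fun y _ => by ring
          _ = ∑ x, (B.mulVec v x)^2 / (r * s) := by
              refine Finset.sum_congr rfl fun x _ => ?_
              have hx0 := (hsx x).ne'
              have hr0 := hrpos.ne'
              have hs0 := hs.ne'
              rw [hx x]
              simp only [hfdef]
              field_simp
          _ = r / s := by
              rw [← Finset.sum_div, ← hr2, sq, mul_div_mul_left _ _ hrpos.ne']
      have hmem : r / s ∈ S1 := ⟨f, g, c1, c2, c3, c4, hval.symm⟩
      have hle : r ≤ r / s := by
        rw [le_div_iff₀ hs]
        nlinarith
      exact hle.trans (le_csSup hbdd1 hmem)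
  exact le_antisymm dir1 dir2
end

section
/- Let (X,Y) be finitely supported discrete random variables with joint pmf p(x,y) and strictly positive marginals. Then χ²(p(x,y) ‖ p(x)p(y)) / (min{|𝒳|,|𝒴|} − 1) ≤ ρ_m(X;Y)² ≤ χ²(p(x,y) ‖ p(x)p(y)), where χ²(p‖q) = Σ p²/q − 1 is the chi-squared divergence. -/
open BigOperators Finset
open scoped Classical

set_option linter.unusedSectionVars false
namespace MCAux
open Matrix

variable {X Y : Type*} [Fintype X] [Fintype Y]

noncomputable def uu (p : X → Y → ℝ) (x : X) : ℝ := Real.sqrt (∑ y, p x y)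
noncomputable def vv (p : X → Y → ℝ) (y : Y) : ℝ := Real.sqrt (∑ x, p x y)
noncomputable def AA (p : X → Y → ℝ) : Matrix X Y ℝ :=
  Matrix.of fun x y => p x y / (uu p x * vv p y) - uu p x * vv p y

variable {p : X → Y → ℝ}

lemma upos (hX : ∀ x, 0 < ∑ y, p x y) (x : X) : 0 < uu p x := Real.sqrt_pos.2 (hX x)
lemma vpos (hY : ∀ y, 0 < ∑ x, p x y) (y : Y) : 0 < vv p y := Real.sqrt_pos.2 (hY y)
lemma usq (hX : ∀ x, 0 < ∑ y, p x y) (x : X) : uu p x ^ 2 = ∑ y, p x y :=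
  Real.sq_sqrt (hX x).le
lemma vsq (hY : ∀ y, 0 < ∑ x, p x y) (y : Y) : vv p y ^ 2 = ∑ x, p x y :=
  Real.sq_sqrt (hY y).le

lemma sum_usq (hX : ∀ x, 0 < ∑ y, p x y) (hsum : ∑ x, ∑ y, p x y = 1) :
    ∑ x, uu p x ^ 2 = 1 := by
  simp only [usq hX]; exact hsum

lemma sum_vsq (hY : ∀ y, 0 < ∑ x, p x y) (hsum : ∑ x, ∑ y, p x y = 1) :
    ∑ y, vv p y ^ 2 = 1 := by
  simp only [vsq hY]; rw [Finset.sum_comm]; exact hsum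

/-- Frobenius norm squared of `AA p` equals the chi-squared divergence. -/
lemma frob (hX : ∀ x, 0 < ∑ y, p x y) (hY : ∀ y, 0 < ∑ x, p x y)
    (hsum : ∑ x, ∑ y, p x y = 1) :
    ∑ x, ∑ y, (AA p x y) ^ 2
      = ∑ x, ∑ y, (p x y) ^ 2 / ((∑ y', p x y') * (∑ x', p x' y)) - 1 := by
  have key : ∀ x y, (AA p x y) ^ 2
      = (p x y) ^ 2 / ((∑ y', p x y') * (∑ x', p x' y)) - 2 * p x y
        + uu p x ^ 2 * vv p y ^ 2 := by
    intro x y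
    have hu := (upos hX x).ne'
    have hv := (vpos hY y).ne'
    have huv : uu p x ^ 2 * vv p y ^ 2 = (∑ y', p x y') * (∑ x', p x' y) := by
      rw [usq hX, vsq hY]
    rw [← huv]
    unfold AA; simp only [Matrix.of_apply]
    field_simp
    ring
  simp only [key, Finset.sum_add_distrib, Finset.sum_sub_distrib]
  have h2 : ∑ x, ∑ y, 2 * p x y = 2 := by
    simp only [← Finset.mul_sum]; rw [hsum, mul_one]
  have h3 : ∑ x, ∑ y, uu p x ^ 2 * vv p y ^ 2 = 1 := by
    simp only [← Finset.mul_sum, sum_vsq hY hsum, mul_one]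
    exact sum_usq hX hsum
  rw [h2, h3]
  ring

/-- The defining set for `maxCorr`. -/
def SS (p : X → Y → ℝ) : Set ℝ :=
  {r : ℝ | ∃ f : X → ℝ, ∃ g : Y → ℝ,
    (∑ x, ∑ y, p x y * f x) = 0 ∧
    (∑ x, ∑ y, p x y * g y) = 0 ∧
    (∑ x, ∑ y, p x y * (f x) ^ 2) = 1 ∧
    (∑ x, ∑ y, p x y * (g y) ^ 2) = 1 ∧
    r = ∑ x, ∑ y, p x y * f x * g y}

lemma sumX (f : X → ℝ) : ∑ x, ∑ y, p x y * f x = ∑ x, (∑ y, p x y) * f x := by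
  congr 1; ext x; rw [Finset.sum_mul]

lemma sumY (g : Y → ℝ) : ∑ x, ∑ y, p x y * g y = ∑ y, (∑ x, p x y) * g y := by
  rw [Finset.sum_comm]; congr 1; ext y; rw [Finset.sum_mul]

lemma bilin (hX : ∀ x, 0 < ∑ y, p x y) (hY : ∀ y, 0 < ∑ x, p x y)
    (φ : X → ℝ) (ψ : Y → ℝ) :
    ∑ x, ∑ y, φ x * AA p x y * ψ y
      = ∑ x, ∑ y, p x y * (φ x / uu p x) * (ψ y / vv p y)
        - (∑ x, uu p x * φ x) * (∑ y, vv p y * ψ y) := by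
  have key : ∀ x y, φ x * AA p x y * ψ y
      = p x y * (φ x / uu p x) * (ψ y / vv p y) - (uu p x * φ x) * (vv p y * ψ y) := by
    intro x y
    have hu := (upos hX x).ne'
    have hv := (vpos hY y).ne'
    unfold AA; simp only [Matrix.of_apply]
    field_simp
  simp only [key, Finset.sum_sub_distrib]
  congr 1
  rw [Finset.sum_mul]
  congr 1; ext x
  rw [Finset.mul_sum]

lemma mem_SS (hX : ∀ x, 0 < ∑ y, p x y) (hY : ∀ y, 0 < ∑ x, p x y)
    {φ : X → ℝ} {ψ : Y → ℝ}
    (hφ1 : ∑ x, (φ x) ^ 2 = 1) (hψ1 : ∑ y, (ψ y) ^ 2 = 1)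
    (hφ0 : ∑ x, uu p x * φ x = 0) (hψ0 : ∑ y, vv p y * ψ y = 0) :
    (∑ x, ∑ y, φ x * AA p x y * ψ y) ∈ SS p := by
  refine ⟨fun x => φ x / uu p x, fun y => ψ y / vv p y, ?_, ?_, ?_, ?_, ?_⟩
  · rw [sumX]
    have : ∀ x, (∑ y, p x y) * (φ x / uu p x) = uu p x * φ x := by
      intro x
      rw [← usq hX x]
      have hu := (upos hX x).ne'
      field_simp
    simp only [this]; exact hφ0
  · rw [sumY]
    have : ∀ y, (∑ x, p x y) * (ψ y / vv p y) = vv p y * ψ y := by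
      intro y
      rw [← vsq hY y]
      have hv := (vpos hY y).ne'
      field_simp
    simp only [this]; exact hψ0
  · rw [sumX]
    have : ∀ x, (∑ y, p x y) * (φ x / uu p x) ^ 2 = (φ x) ^ 2 := by
      intro x
      rw [← usq hX x]
      have hu := (upos hX x).ne'
      field_simp
    simp only [this]; exact hφ1
  · rw [sumY]
    have : ∀ y, (∑ x, p x y) * (ψ y / vv p y) ^ 2 = (ψ y) ^ 2 := by
      intro y
      rw [← vsq hY y]
      have hv := (vpos hY y).ne'
      field_simp
    simp only [this]; exact hψ1
  · rw [bilin hX hY, hφ0, zero_mul, sub_zero]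

lemma sq_le_frob (hX : ∀ x, 0 < ∑ y, p x y) (hY : ∀ y, 0 < ∑ x, p x y)
    {r : ℝ} (hr : r ∈ SS p) : r ^ 2 ≤ ∑ x, ∑ y, (AA p x y) ^ 2 := by
  obtain ⟨f, g, h1, h2, h3, h4, h5⟩ := hr
  set φ : X → ℝ := fun x => uu p x * f x with hφ
  set ψ : Y → ℝ := fun y => vv p y * g y with hψ
  have hXf : ∑ x, uu p x * φ x = 0 := by
    rw [sumX] at h1
    rw [← h1]
    congr 1; ext x
    rw [← usq hX x, hφ]; ring
  have hYg : ∑ y, vv p y * ψ y = 0 := by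
    rw [sumY] at h2
    rw [← h2]
    congr 1; ext y
    rw [← vsq hY y, hψ]; ring
  have hφsq : ∑ x, (φ x) ^ 2 = 1 := by
    rw [sumX] at h3
    rw [← h3]
    congr 1; ext x
    rw [← usq hX x, hφ]; ring
  have hψsq : ∑ y, (ψ y) ^ 2 = 1 := by
    rw [sumY] at h4
    rw [← h4]
    congr 1; ext y
    rw [← vsq hY y, hψ]; ring
  have hreq : r = ∑ x, ∑ y, φ x * AA p x y * ψ y := by
    rw [bilin hX hY, hXf, zero_mul, sub_zero, h5]
    congr 1; ext x; congr 1; ext y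
    have hu := (upos hX x).ne'
    have hv := (vpos hY y).ne'
    rw [hφ, hψ]
    simp only []
    rw [mul_div_cancel_left₀ _ hu, mul_div_cancel_left₀ _ hv]
  have cs := Finset.sum_mul_sq_le_sq_mul_sq Finset.univ
      (fun z : X × Y => AA p z.1 z.2) (fun z : X × Y => φ z.1 * ψ z.2)
  rw [Fintype.sum_prod_type, Fintype.sum_prod_type, Fintype.sum_prod_type] at cs
  have e1 : ∑ x, ∑ y, AA p x y * (φ x * ψ y) = r := by
    rw [hreq]; congr 1; ext x; congr 1; ext y; ring
  have e2 : ∑ x, ∑ y, (φ x * ψ y) ^ 2 = 1 := by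
    have : ∀ x, ∑ y, (φ x * ψ y) ^ 2 = (φ x) ^ 2 * ∑ y, (ψ y) ^ 2 := by
      intro x; rw [Finset.mul_sum]; congr 1; ext y; ring
    simp only [this, hψsq, mul_one]
    exact hφsq
  rw [e1, e2, mul_one] at cs
  exact cs

lemma frob_nonneg : (0:ℝ) ≤ ∑ x, ∑ y, (AA p x y) ^ 2 := by positivity

lemma bddSS (hX : ∀ x, 0 < ∑ y, p x y) (hY : ∀ y, 0 < ∑ x, p x y) :
    BddAbove (SS p) := by
  refine ⟨Real.sqrt (∑ x, ∑ y, (AA p x y) ^ 2), fun r hr => ?_⟩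
  calc r ≤ |r| := le_abs_self r
    _ = Real.sqrt (r ^ 2) := (Real.sqrt_sq_eq_abs r).symm
    _ ≤ _ := Real.sqrt_le_sqrt (sq_le_frob hX hY hr)

lemma upper (hX : ∀ x, 0 < ∑ y, p x y) (hY : ∀ y, 0 < ∑ x, p x y) :
    (sSup (SS p)) ^ 2 ≤ ∑ x, ∑ y, (AA p x y) ^ 2 := by
  rcases Set.eq_empty_or_nonempty (SS p) with he | ⟨r₀, hr₀⟩
  · rw [he, Real.sSup_empty]
    simpa using frob_nonneg (p := p)
  · set F := ∑ x, ∑ y, (AA p x y) ^ 2 with hF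
    have habs : ∀ r ∈ SS p, |r| ≤ Real.sqrt F := by
      intro r hr
      rw [← Real.sqrt_sq_eq_abs]
      exact Real.sqrt_le_sqrt (sq_le_frob hX hY hr)
    have h1 : sSup (SS p) ≤ Real.sqrt F :=
      csSup_le ⟨r₀, hr₀⟩ (fun r hr => (le_abs_self r).trans (habs r hr))
    have h2 : -Real.sqrt F ≤ sSup (SS p) := by
      refine le_trans ?_ (le_csSup (bddSS hX hY) hr₀)
      exact neg_le_of_abs_le (habs r₀ hr₀)
    calc (sSup (SS p)) ^ 2 ≤ (Real.sqrt F) ^ 2 := sq_le_sq' h2 h1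
      _ = F := Real.sq_sqrt (frob_nonneg)

lemma Av (hX : ∀ x, 0 < ∑ y, p x y) (hY : ∀ y, 0 < ∑ x, p x y)
    (hsum : ∑ x, ∑ y, p x y = 1) : AA p *ᵥ vv p = 0 := by
  funext x
  show ∑ y, AA p x y * vv p y = 0
  have key : ∀ y, AA p x y * vv p y = p x y / uu p x - uu p x * vv p y ^ 2 := by
    intro y
    have hu := (upos hX x).ne'
    have hv := (vpos hY y).ne'
    unfold AA; simp only [Matrix.of_apply]
    field_simp
  simp only [key, Finset.sum_sub_distrib, ← Finset.sum_div, ← Finset.mul_sum,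
    sum_vsq hY hsum, mul_one]
  rw [← usq hX x]
  have hu := (upos hX x).ne'
  field_simp
  ring

lemma uA (hX : ∀ x, 0 < ∑ y, p x y) (hY : ∀ y, 0 < ∑ x, p x y)
    (hsum : ∑ x, ∑ y, p x y = 1) : Matrix.vecMul (uu p) (AA p) = 0 := by
  funext y
  show ∑ x, uu p x * AA p x y = 0
  have key : ∀ x, uu p x * AA p x y = p x y / vv p y - vv p y * uu p x ^ 2 := by
    intro x
    have hu := (upos hX x).ne'
    have hv := (vpos hY y).ne'
    unfold AA; simp only [Matrix.of_apply]
    field_simp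
  simp only [key, Finset.sum_sub_distrib, ← Finset.sum_div, ← Finset.mul_sum,
    sum_usq hX hsum, mul_one]
  rw [← vsq hY y]
  have hv := (vpos hY y).ne'
  field_simp
  ring

lemma keybound (hX : ∀ x, 0 < ∑ y, p x y) (hY : ∀ y, 0 < ∑ x, p x y)
    (hsum : ∑ x, ∑ y, p x y = 1) (ψ : Y → ℝ) (hψ : ∑ y, (ψ y) ^ 2 = 1) :
    ∑ x, ((AA p *ᵥ ψ) x) ^ 2 ≤ (sSup (SS p)) ^ 2 := by
  set w := AA p *ᵥ ψ with hw
  set K := ∑ x, (w x) ^ 2 with hK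
  have hK0 : 0 ≤ K := by positivity
  rcases hK0.eq_or_lt with h0 | hKpos
  · rw [← h0]; exact sq_nonneg _
  set c := ∑ y, vv p y * ψ y with hc
  set ψ' : Y → ℝ := fun y => ψ y - c * vv p y with hψ'
  have hAψ' : AA p *ᵥ ψ' = w := by
    have : ψ' = ψ - c • vv p := by funext y; simp [hψ', smul_eq_mul]
    rw [this, Matrix.mulVec_sub, Matrix.mulVec_smul, Av hX hY hsum, smul_zero, sub_zero]
  have hψ'sq : ∑ y, (ψ' y) ^ 2 = 1 - c ^ 2 := by
    have e : ∀ y, (ψ' y) ^ 2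
        = (ψ y) ^ 2 - 2 * c * (vv p y * ψ y) + c ^ 2 * (vv p y) ^ 2 := by
      intro y; simp only [hψ']; ring
    simp only [e, Finset.sum_add_distrib, Finset.sum_sub_distrib, ← Finset.mul_sum,
      hψ, sum_vsq hY hsum, mul_one, ← hc]
    ring
  have hψ'pos : 0 < ∑ y, (ψ' y) ^ 2 := by
    rcases (show (0:ℝ) ≤ ∑ y, (ψ' y) ^ 2 by positivity).eq_or_lt with h | h
    · exfalso
      have hz : ∀ y, ψ' y = 0 := by
        intro y
        have := (Finset.sum_eq_zero_iff_of_nonneg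
          (fun y _ => sq_nonneg (ψ' y))).1 h.symm y (Finset.mem_univ y)
        exact (pow_eq_zero_iff two_ne_zero).1 this
      have : w = 0 := by
        rw [← hAψ']
        have : ψ' = 0 := funext hz
        rw [this, Matrix.mulVec_zero]
      rw [hK, this] at hKpos
      simp at hKpos
    · exact h
  set t := Real.sqrt (∑ y, (ψ' y) ^ 2) with ht
  have htpos : 0 < t := Real.sqrt_pos.2 hψ'pos
  have ht1 : t ≤ 1 := by
    rw [ht, show (1:ℝ) = Real.sqrt 1 by simp]
    exact Real.sqrt_le_sqrt (by rw [hψ'sq]; nlinarith [sq_nonneg c])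
  set s := Real.sqrt K with hs
  have hspos : 0 < s := Real.sqrt_pos.2 hKpos
  have hs2 : s ^ 2 = K := Real.sq_sqrt hK0
  have ht2 : t ^ 2 = ∑ y, (ψ' y) ^ 2 := Real.sq_sqrt hψ'pos.le
  set φ : X → ℝ := fun x => w x / s with hφ
  set ψh : Y → ℝ := fun y => ψ' y / t with hψh
  have hφ1 : ∑ x, (φ x) ^ 2 = 1 := by
    simp only [hφ, div_pow, ← Finset.sum_div, ← hK, ← hs2]
    field_simp
  have hψh1 : ∑ y, (ψh y) ^ 2 = 1 := by
    simp only [hψh, div_pow, ← Finset.sum_div, ← ht2]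
    field_simp
  have hφ0 : ∑ x, uu p x * φ x = 0 := by
    have e : ∑ x, uu p x * w x = 0 := by
      have : ∑ x, uu p x * w x = ∑ y, (Matrix.vecMul (uu p) (AA p)) y * ψ y := by
        simp only [hw, Matrix.mulVec, Matrix.vecMul, dotProduct, Finset.mul_sum,
          Finset.sum_mul]
        rw [Finset.sum_comm]
        congr 1; ext x; congr 1; ext y; ring
      rw [this, uA hX hY hsum]
      simp
    simp only [hφ, mul_div_assoc']
    rw [← Finset.sum_div, e, zero_div]
  have hψh0 : ∑ y, vv p y * ψh y = 0 := by
    have e : ∑ y, vv p y * ψ' y = 0 := by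
      have : ∀ y, vv p y * ψ' y = vv p y * ψ y - c * (vv p y) ^ 2 := by
        intro y; simp only [hψ']; ring
      simp only [this, Finset.sum_sub_distrib, ← Finset.mul_sum, sum_vsq hY hsum,
        mul_one, ← hc, sub_self]
    simp only [hψh, mul_div_assoc']
    rw [← Finset.sum_div, e, zero_div]
  have hmem := mem_SS hX hY hφ1 hψh1 hφ0 hψh0
  have hle : (∑ x, ∑ y, φ x * AA p x y * ψh y) ≤ sSup (SS p) :=
    le_csSup (bddSS hX hY) hmem
  have hval : (∑ x, ∑ y, φ x * AA p x y * ψh y) = s / t := by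
    have e : ∀ x, ∑ y, φ x * AA p x y * ψh y = (w x * w x) / (s * t) := by
      intro x
      have h1 : ∑ y, AA p x y * ψ' y = w x := by rw [← hAψ']; rfl
      have h2 : ∑ y, φ x * AA p x y * ψh y
          = (w x / s) * ((∑ y, AA p x y * ψ' y) / t) := by
        rw [Finset.sum_div, Finset.mul_sum]
        congr 1; ext y; simp only [hφ, hψh]; ring
      rw [h2, h1]; ring
    simp only [e]
    rw [← Finset.sum_div]
    have : ∑ x, w x * w x = K := by rw [hK]; congr 1; ext x; ring
    rw [this, ← hs2]
    field_simp
  have hst : s ≤ s / t := by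
    rw [div_eq_mul_inv]
    nlinarith [(one_le_inv_iff₀.2 ⟨htpos, ht1⟩ : (1:ℝ) ≤ t⁻¹)]
  have hfin : s ≤ sSup (SS p) := by
    rw [hval] at hle
    exact hst.trans hle
  calc K = s ^ 2 := hs2.symm
    _ ≤ (sSup (SS p)) ^ 2 := by nlinarith

lemma trace_eq_sum_eigs {n : Type*} [Fintype n] [DecidableEq n] (M : Matrix n n ℝ)
    (hM : M.IsHermitian) : M.trace = ∑ i, hM.eigenvalues i := by
  conv_lhs => rw [hM.spectral_theorem, Unitary.conjStarAlgAut_apply]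
  rw [Matrix.trace_mul_comm, ← Matrix.mul_assoc]
  rw [show (star (hM.eigenvectorUnitary : Matrix n n ℝ)) *
      (hM.eigenvectorUnitary : Matrix n n ℝ) = 1 from Unitary.coe_star_mul_self _, one_mul]
  rw [Matrix.trace_diagonal]
  simp

lemma rank_le_of_ker {m n : Type*} [Fintype m] [Fintype n] (B : Matrix m n ℝ)
    (v : n → ℝ) (hv : v ≠ 0) (hBv : B *ᵥ v = 0) :
    B.rank + 1 ≤ Fintype.card n := by
  classical
  have hrn := LinearMap.finrank_range_add_finrank_ker B.mulVecLin
  rw [Module.finrank_pi] at hrn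
  have hker : 1 ≤ Module.finrank ℝ (LinearMap.ker B.mulVecLin) := by
    rw [Nat.one_le_iff_ne_zero]
    intro h
    rw [Submodule.finrank_eq_zero] at h
    have : v ∈ LinearMap.ker B.mulVecLin := by
      rw [LinearMap.mem_ker, Matrix.mulVecLin_apply, hBv]
    rw [h, Submodule.mem_bot] at this
    exact hv this
  have : B.rank = Module.finrank ℝ (LinearMap.range B.mulVecLin) := rfl
  omega

lemma v_ne_zero (hY : ∀ y, 0 < ∑ x, p x y) (hcY : 2 ≤ Fintype.card Y) :
    vv p ≠ 0 := by
  have : 0 < Fintype.card Y := by omega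
  obtain ⟨y⟩ := Fintype.card_pos_iff.1 this
  intro h
  have := vpos hY y
  rw [h] at this
  simp at this

lemma u_ne_zero (hX : ∀ x, 0 < ∑ y, p x y) (hcX : 2 ≤ Fintype.card X) :
    uu p ≠ 0 := by
  have : 0 < Fintype.card X := by omega
  obtain ⟨x⟩ := Fintype.card_pos_iff.1 this
  intro h
  have := upos hX x
  rw [h] at this
  simp at this

lemma rank_le_min (hX : ∀ x, 0 < ∑ y, p x y) (hY : ∀ y, 0 < ∑ x, p x y)
    (hsum : ∑ x, ∑ y, p x y = 1) (hcX : 2 ≤ Fintype.card X) (hcY : 2 ≤ Fintype.card Y) :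
    (AA p).rank + 1 ≤ min (Fintype.card X) (Fintype.card Y) := by
  have h1 : (AA p).rank + 1 ≤ Fintype.card Y :=
    rank_le_of_ker (AA p) (vv p) (v_ne_zero hY hcY) (Av hX hY hsum)
  have h2 : (AA p).rank + 1 ≤ Fintype.card X := by
    have := rank_le_of_ker ((AA p)ᵀ) (uu p) (u_ne_zero hX hcX) ?_
    · rwa [Matrix.rank_transpose] at this
    · rw [Matrix.mulVec_transpose, uA hX hY hsum]
  omega

lemma trace_M : ((AA p)ᴴ * (AA p)).trace = ∑ x, ∑ y, (AA p x y) ^ 2 := by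
  have e : ∀ y, ((AA p)ᴴ * AA p).diag y = ∑ x, (AA p x y) ^ 2 := by
    intro y
    simp [Matrix.diag, Matrix.mul_apply, Matrix.conjTranspose_apply, sq]
  rw [Matrix.trace]
  simp only [e]
  rw [Finset.sum_comm]

lemma eig_eq_norm {m n : Type*} [Fintype m] [Fintype n] [DecidableEq n]
    (B : Matrix m n ℝ) (i : n) :
    ∃ w : n → ℝ, (∑ y, (w y) ^ 2 = 1) ∧
      (Matrix.isHermitian_conjTranspose_mul_self B).eigenvalues i
        = ∑ x, ((B *ᵥ w) x) ^ 2 := by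
  set hM := Matrix.isHermitian_conjTranspose_mul_self B with hhM
  have heig := hM.mulVec_eigenvectorBasis i
  set w : n → ℝ := ⇑(hM.eigenvectorBasis i) with hwdef
  have hnorm : ∑ y, (w y) ^ 2 = 1 := by
    have h1 : ‖hM.eigenvectorBasis i‖ = 1 := hM.eigenvectorBasis.orthonormal.1 i
    have h2 : ‖hM.eigenvectorBasis i‖ ^ 2 = 1 := by rw [h1]; norm_num
    rw [EuclideanSpace.norm_eq] at h2
    rw [Real.sq_sqrt (by positivity)] at h2
    simpa [sq_abs, hwdef] using h2
  refine ⟨w, hnorm, ?_⟩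
  have e1 : ∑ y, w y * (((Bᴴ * B) *ᵥ w) y) = hM.eigenvalues i := by
    rw [heig]
    have : ∀ y, w y * ((hM.eigenvalues i • w) y) = hM.eigenvalues i * (w y) ^ 2 := by
      intro y; simp only [Pi.smul_apply, smul_eq_mul]; ring
    simp only [this, ← Finset.mul_sum, hnorm, mul_one]
  have e2 : ∑ y, w y * (((Bᴴ * B) *ᵥ w) y) = ∑ x, ((B *ᵥ w) x) ^ 2 := by
    rw [← Matrix.mulVec_mulVec]
    simp only [Matrix.mulVec, dotProduct, Matrix.conjTranspose_apply, star_trivial,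
      Finset.mul_sum]
    rw [Finset.sum_comm]
    congr 1; ext x
    rw [sq, Finset.sum_mul]
    congr 1; ext y
    rw [Finset.mul_sum]
    congr 1; ext y'
    ring
  rw [← e1, e2]

end MCAux

theorem stmt1 {X Y : Type*} [Fintype X] [Fintype Y]
    (p : X → Y → ℝ) (hp : ∀ x y, 0 ≤ p x y) (hsum : ∑ x, ∑ y, p x y = 1)
    (hX : ∀ x, 0 < ∑ y, p x y) (hY : ∀ y, 0 < ∑ x, p x y)
    (hcX : 2 ≤ Fintype.card X) (hcY : 2 ≤ Fintype.card Y) :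
    (∑ x, ∑ y, (p x y) ^ 2 / ((∑ y', p x y') * (∑ x', p x' y)) - 1) /
        (((min (Fintype.card X) (Fintype.card Y) : ℕ) : ℝ) - 1) ≤ (maxCorr p) ^ 2 ∧
    (maxCorr p) ^ 2 ≤ ∑ x, ∑ y, (p x y) ^ 2 / ((∑ y', p x y') * (∑ x', p x' y)) - 1 := by
  classical
  have hρ : maxCorr p = sSup (MCAux.SS p) := rfl
  have hfr := MCAux.frob hX hY hsum
  set C := ∑ x, ∑ y, (p x y) ^ 2 / ((∑ y', p x y') * (∑ x', p x' y)) - 1 with hC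
  constructor
  · set hM := Matrix.isHermitian_conjTranspose_mul_self (MCAux.AA p) with hhM
    have htr := MCAux.trace_M (p := p)
    have htr2 := MCAux.trace_eq_sum_eigs _ hM
    have heig : ∀ i, hM.eigenvalues i ≤ (maxCorr p) ^ 2 := by
      intro i
      obtain ⟨w, hw1, hw2⟩ := MCAux.eig_eq_norm (MCAux.AA p) i
      rw [hρ]
      calc hM.eigenvalues i = ∑ x, ((MCAux.AA p).mulVec w x) ^ 2 := hw2
        _ ≤ (sSup (MCAux.SS p)) ^ 2 := MCAux.keybound hX hY hsum w hw1
    have hsum_eigs : ∑ i, hM.eigenvalues i ≤ ((MCAux.AA p).rank : ℝ) * (maxCorr p) ^ 2 := by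
      rw [← Finset.sum_filter_ne_zero (s := Finset.univ) (f := fun i => hM.eigenvalues i)]
      calc ∑ i ∈ Finset.univ.filter (fun i => hM.eigenvalues i ≠ 0), hM.eigenvalues i
          ≤ (Finset.univ.filter (fun i => hM.eigenvalues i ≠ 0)).card • ((maxCorr p) ^ 2) :=
            Finset.sum_le_card_nsmul _ _ _ (fun i _ => heig i)
        _ = ((Finset.univ.filter (fun i => hM.eigenvalues i ≠ 0)).card : ℝ) * (maxCorr p) ^ 2 := by
            rw [nsmul_eq_mul]
        _ = ((MCAux.AA p).rank : ℝ) * (maxCorr p) ^ 2 := by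
            congr 2
            rw [← Matrix.rank_conjTranspose_mul_self (MCAux.AA p), hM.rank_eq_card_non_zero_eigs,
              Fintype.card_subtype]
    have hrank := MCAux.rank_le_min hX hY hsum hcX hcY
    set m := min (Fintype.card X) (Fintype.card Y) with hm
    have hm2 : 2 ≤ m := le_min hcX hcY
    have hcast : ((MCAux.AA p).rank : ℝ) ≤ (m : ℝ) - 1 := by
      have h1 : (MCAux.AA p).rank ≤ m - 1 := by omega
      have h2 : (1:ℕ) ≤ m := by omega
      calc ((MCAux.AA p).rank : ℝ) ≤ ((m - 1 : ℕ) : ℝ) := Nat.cast_le.2 h1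
        _ = (m : ℝ) - 1 := by rw [Nat.cast_sub h2, Nat.cast_one]
    have hCle : C ≤ ((m : ℝ) - 1) * (maxCorr p) ^ 2 := by
      calc C = ∑ x, ∑ y, (MCAux.AA p x y) ^ 2 := hfr.symm
        _ = ((MCAux.AA p).conjTranspose * (MCAux.AA p)).trace := htr.symm
        _ = ∑ i, hM.eigenvalues i := htr2
        _ ≤ ((MCAux.AA p).rank : ℝ) * (maxCorr p) ^ 2 := hsum_eigs
        _ ≤ ((m : ℝ) - 1) * (maxCorr p) ^ 2 :=
            mul_le_mul_of_nonneg_right hcast (sq_nonneg _)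
    have hd : (0:ℝ) < (m : ℝ) - 1 := by
      have : (2:ℝ) ≤ (m : ℝ) := by exact_mod_cast hm2
      linarith
    rw [div_le_iff₀ hd]
    linarith
  · rw [hρ]
    calc (sSup (MCAux.SS p)) ^ 2 ≤ ∑ x, ∑ y, (MCAux.AA p x y) ^ 2 := MCAux.upper hX hY
      _ = C := hfr
end

section
/- Let X and Y be finitely supported discrete random variables. Then I(X;Y) ≤ log((min{|𝒳|,|𝒴|} − 1)·ρ_m(X;Y)² + 1), where I(X;Y) is the mutual information (in bits) and ρ_m is the maximal correlation. -/
open BigOperators Finset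
open scoped Classical
open scoped RealInnerProductSpace

/- ## Algebraic helper lemmas -/

private lemma sqrt_subst (r : ℝ) (hr : 0 < r) :
    ∃ a : ℝ, 0 < a ∧ r = a ^ 2 ∧ Real.sqrt r = a :=
  ⟨Real.sqrt r, Real.sqrt_pos.2 hr, (Real.sq_sqrt hr.le).symm, rfl⟩

private lemma helper1 (r v : ℝ) (hr : 0 < r) : r * (v / Real.sqrt r) = Real.sqrt r * v := by
  obtain ⟨a, ha, h1, h2⟩ := sqrt_subst r hr
  rw [h1, Real.sqrt_sq ha.le] ; field_simp ; try ring

private lemma helper2 (r v : ℝ) (hr : 0 < r) : r * (v / Real.sqrt r) ^ 2 = v ^ 2 := by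
  obtain ⟨a, ha, h1, h2⟩ := sqrt_subst r hr
  rw [h1, Real.sqrt_sq ha.le] ; field_simp ; try ring

private lemma helper3 (q c h : ℝ) (hq : q ≠ 0) (hc : c ≠ 0) : q * (h / (q * c)) = h / c := by
  field_simp ; try ring

private lemma helper4 (q c h : ℝ) (hq : q ≠ 0) (hc : c ≠ 0) :
    q * (h / (q * c)) ^ 2 = h ^ 2 / q / c ^ 2 := by
  field_simp ; try ring

private lemma helper5 (p q r v : ℝ) (hq : 0 < q) (hr : 0 < r) :
    (p - q * r) / (Real.sqrt q * Real.sqrt r) * v =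
      (p * (v / Real.sqrt r)) / Real.sqrt q - Real.sqrt q * (Real.sqrt r * v) := by
  obtain ⟨a, ha, h1, h2⟩ := sqrt_subst q hq
  obtain ⟨b, hb, h3, h4⟩ := sqrt_subst r hr
  rw [h1, Real.sqrt_sq ha.le, h3, Real.sqrt_sq hb.le] ; field_simp ; try ring

private lemma helper6 (p q r : ℝ) (hq : 0 < q) (hr : 0 < r) :
    (p - q * r) / (Real.sqrt q * Real.sqrt r) * Real.sqrt r = (p - q * r) / Real.sqrt q := by
  obtain ⟨a, ha, h1, h2⟩ := sqrt_subst q hq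
  obtain ⟨b, hb, h3, h4⟩ := sqrt_subst r hr
  rw [h1, Real.sqrt_sq ha.le, h3, Real.sqrt_sq hb.le] ; field_simp ; try ring

private lemma helper7 (p q r : ℝ) (hq : 0 < q) (hr : 0 < r) :
    ((p - q * r) / (Real.sqrt q * Real.sqrt r)) ^ 2 = p ^ 2 / (q * r) - 2 * p + q * r := by
  obtain ⟨a, ha, h1, h2⟩ := sqrt_subst q hq
  obtain ⟨b, hb, h3, h4⟩ := sqrt_subst r hr
  rw [h1, Real.sqrt_sq ha.le, h3, Real.sqrt_sq hb.le] ; field_simp ; try ring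

private lemma sum_prod_eq {X Y : Type*} [Fintype X] [Fintype Y] (F : X → Y → ℝ) :
    (∑ z : X × Y, F z.1 z.2) = ∑ x, ∑ y, F x y :=
  Fintype.sum_prod_type (f := fun z : X × Y => F z.1 z.2)

/- ## The candidate set of maxCorr -/

def corrSet {X Y : Type*} [Fintype X] [Fintype Y] (p : X → Y → ℝ) : Set ℝ :=
  {r : ℝ | ∃ f : X → ℝ, ∃ g : Y → ℝ,
    (∑ x, ∑ y, p x y * f x) = 0 ∧
    (∑ x, ∑ y, p x y * g y) = 0 ∧
    (∑ x, ∑ y, p x y * (f x) ^ 2) = 1 ∧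
    (∑ x, ∑ y, p x y * (g y) ^ 2) = 1 ∧
    r = ∑ x, ∑ y, p x y * f x * g y}

lemma maxCorr_eq_sSup_corrSet {X Y : Type*} [Fintype X] [Fintype Y] (p : X → Y → ℝ) :
    maxCorr p = sSup (corrSet p) := rfl

/-- The centered normalized matrix of a joint pmf. -/
noncomputable def hgrM {X Y : Type*} [Fintype X] [Fintype Y] (p : X → Y → ℝ) (x : X) (y : Y) :
    ℝ :=
  (p x y - (∑ y', p x y') * (∑ x', p x' y)) /
    (Real.sqrt (∑ y', p x y') * Real.sqrt (∑ x', p x' y))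

lemma hgrM_swap {X Y : Type*} [Fintype X] [Fintype Y] (p : X → Y → ℝ) (x : X) (y : Y) :
    hgrM (fun y x => p x y) y x = hgrM p x y := by
  simp only [hgrM]
  rw [mul_comm (∑ x', p x' y), mul_comm (Real.sqrt (∑ x', p x' y))]

lemma corrSet_swap_subset {X Y : Type*} [Fintype X] [Fintype Y] (p : X → Y → ℝ) :
    corrSet (fun y x => p x y) ⊆ corrSet p := by
  rintro s ⟨f, g, h1, h2, h3, h4, h5⟩
  refine ⟨g, f, ?_, ?_, ?_, ?_, ?_⟩
  · rw [Finset.sum_comm] at h2; exact h2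
  · rw [Finset.sum_comm] at h1; exact h1
  · rw [Finset.sum_comm] at h4; exact h4
  · rw [Finset.sum_comm] at h3; exact h3
  · calc s = ∑ y, ∑ x, p x y * f y * g x := h5
      _ = ∑ x, ∑ y, p x y * f y * g x := Finset.sum_comm
      _ = ∑ x, ∑ y, p x y * g x * f y := by
          refine Finset.sum_congr rfl fun x _ => Finset.sum_congr rfl fun y _ => ?_
          ring

lemma maxCorr_swap {X Y : Type*} [Fintype X] [Fintype Y] (p : X → Y → ℝ) :
    maxCorr (fun y x => p x y) = maxCorr p := by
  rw [maxCorr_eq_sSup_corrSet, maxCorr_eq_sSup_corrSet]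
  congr 1
  exact Set.Subset.antisymm (corrSet_swap_subset p)
    (corrSet_swap_subset (fun y x => p x y))

/-- The maximal-correlation candidate set is bounded above by `1` (Cauchy–Schwarz). -/
lemma corrSet_bddAbove {X Y : Type*} [Fintype X] [Fintype Y] (p : X → Y → ℝ)
    (hp : ∀ x y, 0 ≤ p x y) : BddAbove (corrSet p) := by
  refine ⟨1, ?_⟩
  rintro r ⟨f, g, -, -, h3, h4, rfl⟩
  set A := ∑ x, ∑ y, p x y * f x * g y with hA
  have key : A ^ 2 ≤ 1 := by
    have h := Finset.sum_mul_sq_le_sq_mul_sq Finset.univ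
      (fun z : X × Y => Real.sqrt (p z.1 z.2) * f z.1)
      (fun z : X × Y => Real.sqrt (p z.1 z.2) * g z.2)
    have e1 : (∑ z : X × Y,
        (Real.sqrt (p z.1 z.2) * f z.1) * (Real.sqrt (p z.1 z.2) * g z.2)) = A := by
      refine Eq.trans (sum_prod_eq
        (fun x y => (Real.sqrt (p x y) * f x) * (Real.sqrt (p x y) * g y))) ?_
      rw [hA]
      refine Finset.sum_congr rfl fun x _ => Finset.sum_congr rfl fun y _ => ?_
      rw [mul_mul_mul_comm, Real.mul_self_sqrt (hp x y)]
      ring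
    have e2 : (∑ z : X × Y, (Real.sqrt (p z.1 z.2) * f z.1) ^ 2) = 1 := by
      refine Eq.trans (sum_prod_eq (fun x y => (Real.sqrt (p x y) * f x) ^ 2)) ?_
      rw [← h3]
      refine Finset.sum_congr rfl fun x _ => Finset.sum_congr rfl fun y _ => ?_
      rw [mul_pow, Real.sq_sqrt (hp x y)]
    have e3 : (∑ z : X × Y, (Real.sqrt (p z.1 z.2) * g z.2) ^ 2) = 1 := by
      refine Eq.trans (sum_prod_eq (fun x y => (Real.sqrt (p x y) * g y) ^ 2)) ?_
      rw [← h4]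
      refine Finset.sum_congr rfl fun x _ => Finset.sum_congr rfl fun y _ => ?_
      rw [mul_pow, Real.sq_sqrt (hp x y)]
    rw [e1, e2, e3, one_mul] at h
    exact h
  nlinarith [sq_nonneg (A - 1)]

/-- Core bound: for a unit vector `v` orthogonal to `√r`, `‖M v‖² ≤ maxCorr p ²`. -/
lemma hgr_vec_bound {X Y : Type*} [Fintype X] [Fintype Y]
    (p : X → Y → ℝ) (hp : ∀ x y, 0 ≤ p x y)
    (hX : ∀ x, 0 < ∑ y, p x y) (hY : ∀ y, 0 < ∑ x, p x y)
    (v : Y → ℝ) (hv1 : ∑ y, (v y) ^ 2 = 1)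
    (hv0 : ∑ y, Real.sqrt (∑ x', p x' y) * v y = 0) :
    ∑ x, (∑ y, hgrM p x y * v y) ^ 2 ≤ (maxCorr p) ^ 2 := by
  set g : Y → ℝ := fun y => v y / Real.sqrt (∑ x', p x' y) with hg
  set h : X → ℝ := fun x => ∑ y, p x y * g y with hh
  have ha2 : ∀ x, Real.sqrt (∑ y', p x y') ^ 2 = ∑ y', p x y' :=
    fun x => Real.sq_sqrt (hX x).le
  -- step 1 : rewrite the matrix-vector product
  have step1 : ∀ x, (∑ y, hgrM p x y * v y) = h x / Real.sqrt (∑ y', p x y') := by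
    intro x
    have e : ∀ y, hgrM p x y * v y =
        (p x y * (v y / Real.sqrt (∑ x', p x' y))) / Real.sqrt (∑ y', p x y') -
          Real.sqrt (∑ y', p x y') * (Real.sqrt (∑ x', p x' y) * v y) := by
      intro y
      rw [hgrM]
      exact helper5 _ _ _ _ (hX x) (hY y)
    rw [Finset.sum_congr rfl fun y _ => e y, Finset.sum_sub_distrib, ← Finset.sum_div,
      ← Finset.mul_sum, hv0, mul_zero, sub_zero, hh]
  have step1' : (∑ x, (∑ y, hgrM p x y * v y) ^ 2) = ∑ x, h x ^ 2 / (∑ y', p x y') := by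
    refine Finset.sum_congr rfl fun x _ => ?_
    rw [step1 x, div_pow, ha2 x]
  rw [step1']
  -- the quantity T
  set T : ℝ := ∑ x, h x ^ 2 / (∑ y', p x y') with hT
  have hT0 : 0 ≤ T := Finset.sum_nonneg fun x _ => div_nonneg (sq_nonneg _) (hX x).le
  rcases eq_or_lt_of_le hT0 with hT0' | hTpos
  · rw [← hT0']; positivity
  -- T > 0 : build witnesses
  set c : ℝ := Real.sqrt T with hc
  have hcpos : 0 < c := Real.sqrt_pos.2 hTpos
  have hc2 : c ^ 2 = T := Real.sq_sqrt hT0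
  set f : X → ℝ := fun x => h x / ((∑ y', p x y') * c) with hf
  -- auxiliary sums
  have hrg : ∀ y, (∑ x', p x' y) * g y = Real.sqrt (∑ x', p x' y) * v y := by
    intro y
    rw [hg]
    exact helper1 _ _ (hY y)
  have hsum_h : ∑ x, h x = 0 := by
    simp only [hh]
    rw [Finset.sum_comm]
    calc ∑ y, ∑ x, p x y * g y = ∑ y, (∑ x, p x y) * g y := by
          refine Finset.sum_congr rfl fun y _ => ?_; rw [Finset.sum_mul]
      _ = ∑ y, Real.sqrt (∑ x', p x' y) * v y := Finset.sum_congr rfl fun y _ => hrg y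
      _ = 0 := hv0
  have hmem : c ∈ corrSet p := by
    refine ⟨f, g, ?_, ?_, ?_, ?_, ?_⟩
    · -- E f = 0
      calc (∑ x, ∑ y, p x y * f x) = ∑ x, (∑ y, p x y) * f x := by
            refine Finset.sum_congr rfl fun x _ => ?_; rw [← Finset.sum_mul]
        _ = ∑ x, h x / c := by
            refine Finset.sum_congr rfl fun x _ => ?_
            rw [hf]
            exact helper3 _ _ _ (hX x).ne' hcpos.ne'
        _ = 0 := by rw [← Finset.sum_div, hsum_h, zero_div]
    · -- E g = 0
      rw [Finset.sum_comm]
      calc (∑ y, ∑ x, p x y * g y) = ∑ y, (∑ x, p x y) * g y := by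
            refine Finset.sum_congr rfl fun y _ => ?_; rw [Finset.sum_mul]
        _ = 0 := by rw [Finset.sum_congr rfl fun y _ => hrg y, hv0]
    · -- E f² = 1
      calc (∑ x, ∑ y, p x y * f x ^ 2) = ∑ x, (∑ y, p x y) * f x ^ 2 := by
            refine Finset.sum_congr rfl fun x _ => ?_; rw [← Finset.sum_mul]
        _ = ∑ x, h x ^ 2 / (∑ y', p x y') / c ^ 2 := by
            refine Finset.sum_congr rfl fun x _ => ?_
            rw [hf]
            exact helper4 _ _ _ (hX x).ne' hcpos.ne'
        _ = T / c ^ 2 := by rw [← Finset.sum_div, hT]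
        _ = 1 := by rw [hc2, div_self hTpos.ne']
    · -- E g² = 1
      rw [Finset.sum_comm]
      calc (∑ y, ∑ x, p x y * g y ^ 2) = ∑ y, (∑ x, p x y) * g y ^ 2 := by
            refine Finset.sum_congr rfl fun y _ => ?_; rw [Finset.sum_mul]
        _ = ∑ y, v y ^ 2 := by
            refine Finset.sum_congr rfl fun y _ => ?_
            rw [hg]
            exact helper2 _ _ (hY y)
        _ = 1 := hv1
    · -- E f g = c
      have e5 : (∑ x, ∑ y, p x y * f x * g y) = ∑ x, f x * h x := by
        refine Finset.sum_congr rfl fun x _ => ?_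
        rw [hh, Finset.mul_sum]
        refine Finset.sum_congr rfl fun y _ => ?_
        ring
      rw [e5]
      have e6 : (∑ x, f x * h x) = T / c := by
        rw [hT, Finset.sum_div]
        refine Finset.sum_congr rfl fun x _ => ?_
        rw [hf]
        have h1 := (hX x).ne'
        field_simp
      rw [e6, ← hc2, sq]
      rw [mul_div_assoc, div_self hcpos.ne', mul_one]
  have hle : c ≤ maxCorr p := by
    rw [maxCorr_eq_sSup_corrSet]
    exact le_csSup (corrSet_bddAbove p hp) hmem
  calc T = c ^ 2 := hc2.symm
    _ ≤ (maxCorr p) ^ 2 := by nlinarith [hcpos.le]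

/-- Frobenius norm bound via an orthonormal basis extending `√r`. -/
lemma hgr_frobenius {X Y : Type*} [Fintype X] [Fintype Y]
    (p : X → Y → ℝ) (hp : ∀ x y, 0 ≤ p x y) (hsum : ∑ x, ∑ y, p x y = 1)
    (hX : ∀ x, 0 < ∑ y, p x y) (hY : ∀ y, 0 < ∑ x, p x y) :
    ∑ x, ∑ y, (hgrM p x y) ^ 2 ≤ ((Fintype.card Y : ℝ) - 1) * (maxCorr p) ^ 2 := by
  have hr1 : (∑ y, ∑ x, p x y) = 1 := by rw [Finset.sum_comm]; exact hsum
  have hYne : Nonempty Y := by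
    by_contra hn
    rw [not_nonempty_iff] at hn
    have : (1 : ℝ) = 0 := by
      rw [← hsum]
      simp
    norm_num at this
  -- the unit vector √r
  set u : EuclideanSpace ℝ Y := WithLp.toLp 2 (fun y => Real.sqrt (∑ x', p x' y)) with hu
  have hnorm_eq : ∀ w : EuclideanSpace ℝ Y, ‖w‖ = Real.sqrt (∑ y, (w y) ^ 2) := by
    intro w
    rw [EuclideanSpace.norm_eq]
    congr 1
    refine Finset.sum_congr rfl fun y _ => ?_
    rw [Real.norm_eq_abs, sq_abs]
  have hinner : ∀ w z : EuclideanSpace ℝ Y, ⟪w, z⟫ = ∑ y, w y * z y := by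
    intro w z
    simp [PiLp.inner_apply, RCLike.inner_apply, conj_trivial, mul_comm]
  have hu_norm : ‖u‖ = 1 := by
    rw [hnorm_eq]
    have e : (∑ y, (u y) ^ 2) = 1 := by
      rw [← hr1]
      refine Finset.sum_congr rfl fun y _ => ?_
      exact Real.sq_sqrt (hY y).le
    rw [e, Real.sqrt_one]
  haveI := hYne
  obtain ⟨y₀⟩ := id hYne
  -- orthonormal basis extending u
  have honb : Orthonormal ℝ (Set.restrict {y₀} (fun _ : Y => u)) := by
    constructor
    · intro i; exact hu_norm
    · intro i j hij
      exact absurd (Subsingleton.elim i j) hij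
  obtain ⟨b, hb⟩ := honb.exists_orthonormalBasis_extension_of_card_eq
    (finrank_euclideanSpace (𝕜 := ℝ) (ι := Y))
  have hby₀ : b y₀ = u := hb y₀ rfl
  -- Parseval
  have parseval : ∀ w : EuclideanSpace ℝ Y, (∑ i, ⟪w, b i⟫ ^ 2) = ∑ y, (w y) ^ 2 := by
    intro w
    have h1 := b.sum_inner_mul_inner w w
    have h2 : (∑ i, ⟪w, b i⟫ * ⟪b i, w⟫) = ∑ i, ⟪w, b i⟫ ^ 2 := by
      refine Finset.sum_congr rfl fun i _ => ?_
      rw [real_inner_comm (b i) w, sq]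
    rw [h2] at h1
    rw [h1, hinner]
    refine Finset.sum_congr rfl fun y _ => (sq (w y)).symm
  -- rows of M
  set row : X → EuclideanSpace ℝ Y := (fun x => WithLp.toLp 2 (fun y => hgrM p x y)) with hrow
  have hrow_inner : ∀ (x : X) (w : EuclideanSpace ℝ Y),
      ⟪row x, w⟫ = ∑ y, hgrM p x y * w y := by
    intro x w
    exact hinner (row x) w
  have main_eq : (∑ x, ∑ y, (hgrM p x y) ^ 2) = ∑ i, ∑ x, ⟪row x, b i⟫ ^ 2 := by
    have e : ∀ x, (∑ y, (hgrM p x y) ^ 2) = ∑ i, ⟪row x, b i⟫ ^ 2 :=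
      fun x => (parseval (row x)).symm
    calc (∑ x, ∑ y, (hgrM p x y) ^ 2) = ∑ x, ∑ i, ⟪row x, b i⟫ ^ 2 :=
          Finset.sum_congr rfl fun x _ => e x
      _ = ∑ i, ∑ x, ⟪row x, b i⟫ ^ 2 := Finset.sum_comm
  -- the y₀ term vanishes : M √r = 0
  have hMu : ∀ x, (∑ y, hgrM p x y * u y) = 0 := by
    intro x
    have e : ∀ y, hgrM p x y * u y =
        (p x y - (∑ y', p x y') * (∑ x', p x' y)) / Real.sqrt (∑ y', p x y') := by
      intro y
      show hgrM p x y * Real.sqrt (∑ x', p x' y) = _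
      rw [hgrM]
      exact helper6 _ _ _ (hX x) (hY y)
    rw [Finset.sum_congr rfl fun y _ => e y, ← Finset.sum_div]
    have e2 : (∑ y, (p x y - (∑ y', p x y') * (∑ x', p x' y))) = 0 := by
      rw [Finset.sum_sub_distrib, ← Finset.mul_sum, hr1, mul_one, sub_self]
    rw [e2, zero_div]
  -- bound each remaining term
  have term_bound : ∀ i ∈ Finset.univ.erase y₀,
      (∑ x, ⟪row x, b i⟫ ^ 2) ≤ (maxCorr p) ^ 2 := by
    intro i hi
    have hine : i ≠ y₀ := Finset.ne_of_mem_erase hi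
    have hv1 : (∑ y, (b i y) ^ 2) = 1 := by
      have hn : ‖b i‖ = 1 := b.orthonormal.1 i
      rw [hnorm_eq] at hn
      have := Real.sqrt_eq_one.mp hn
      exact this
    have hv0 : (∑ y, Real.sqrt (∑ x', p x' y) * b i y) = 0 := by
      have h0 : ⟪b y₀, b i⟫ = 0 := b.orthonormal.2 (Ne.symm hine)
      rw [hby₀, hinner] at h0
      exact h0
    have hbnd := hgr_vec_bound p hp hX hY (fun y => b i y) hv1 hv0
    calc (∑ x, ⟪row x, b i⟫ ^ 2) = ∑ x, (∑ y, hgrM p x y * b i y) ^ 2 := by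
          refine Finset.sum_congr rfl fun x _ => ?_
          rw [hrow_inner x (b i)]
      _ ≤ (maxCorr p) ^ 2 := hbnd
  -- put it together
  rw [main_eq]
  have hsplit : (∑ i, ∑ x, ⟪row x, b i⟫ ^ 2) =
      ∑ i ∈ Finset.univ.erase y₀, ∑ x, ⟪row x, b i⟫ ^ 2 := by
    rw [← Finset.add_sum_erase _ _ (Finset.mem_univ y₀)]
    have e0 : (∑ x, ⟪row x, b y₀⟫ ^ 2) = 0 := by
      refine Finset.sum_eq_zero fun x _ => ?_
      rw [hby₀, hrow_inner x u, hMu x]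
      norm_num
    rw [e0, zero_add]
  rw [hsplit]
  calc (∑ i ∈ Finset.univ.erase y₀, ∑ x, ⟪row x, b i⟫ ^ 2)
      ≤ ∑ i ∈ Finset.univ.erase y₀, (maxCorr p) ^ 2 := Finset.sum_le_sum term_bound
    _ = ((Fintype.card Y : ℝ) - 1) * (maxCorr p) ^ 2 := by
        rw [Finset.sum_const, nsmul_eq_mul, Finset.card_erase_of_mem (Finset.mem_univ y₀),
          Finset.card_univ]
        have h1 : 1 ≤ Fintype.card Y := Fintype.card_pos
        rw [Nat.cast_sub h1, Nat.cast_one]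

/-- Jensen step : `∑ p log₂ (p/(qr)) ≤ log₂ (∑ p²/(qr))`. -/
lemma jensen_bound {X Y : Type*} [Fintype X] [Fintype Y]
    (p : X → Y → ℝ) (hp : ∀ x y, 0 ≤ p x y) (hsum : ∑ x, ∑ y, p x y = 1)
    (hX : ∀ x, 0 < ∑ y, p x y) (hY : ∀ y, 0 < ∑ x, p x y) :
    (∑ x, ∑ y, p x y * Real.logb 2 (p x y / ((∑ y', p x y') * (∑ x', p x' y)))) ≤
    Real.logb 2 (∑ x, ∑ y, p x y ^ 2 / ((∑ y', p x y') * (∑ x', p x' y))) := by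
  classical
  set S : Finset (X × Y) := Finset.univ.filter (fun z => 0 < p z.1 z.2) with hS
  have hpos : ∀ z : X × Y, z ∉ S → p z.1 z.2 = 0 := by
    intro z hz
    rw [hS, Finset.mem_filter] at hz
    push_neg at hz
    exact le_antisymm (hz (Finset.mem_univ z)) (hp z.1 z.2)
  have hw1 : (∑ z ∈ S, p z.1 z.2) = 1 := by
    rw [← hsum, ← sum_prod_eq (fun x y => p x y)]
    exact Finset.sum_subset (Finset.subset_univ S) (fun z _ hz => hpos z hz)
  have hmemS : ∀ z ∈ S, p z.1 z.2 / ((∑ y', p z.1 y') * (∑ x', p x' z.2)) ∈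
      Set.Ioi (0 : ℝ) := by
    intro z hz
    rw [hS, Finset.mem_filter] at hz
    exact div_pos hz.2 (mul_pos (hX z.1) (hY z.2))
  have J := (strictConcaveOn_log_Ioi.concaveOn).le_map_sum
    (w := fun z : X × Y => p z.1 z.2)
    (p := fun z : X × Y => p z.1 z.2 / ((∑ y', p z.1 y') * (∑ x', p x' z.2)))
    (t := S) (fun z _ => hp z.1 z.2) hw1 hmemS
  simp only [smul_eq_mul] at J
  have hlog2 : (0 : ℝ) < Real.log 2 := Real.log_pos (by norm_num)
  calc (∑ x, ∑ y, p x y * Real.logb 2 (p x y / ((∑ y', p x y') * (∑ x', p x' y))))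
      = ∑ z : X × Y, p z.1 z.2 *
          Real.logb 2 (p z.1 z.2 / ((∑ y', p z.1 y') * (∑ x', p x' z.2))) :=
        (sum_prod_eq (fun x y =>
          p x y * Real.logb 2 (p x y / ((∑ y', p x y') * (∑ x', p x' y))))).symm
    _ = (∑ z : X × Y, p z.1 z.2 *
          Real.log (p z.1 z.2 / ((∑ y', p z.1 y') * (∑ x', p x' z.2)))) / Real.log 2 := by
        rw [Finset.sum_div]
        refine Finset.sum_congr rfl fun z _ => ?_
        rw [Real.logb]
        ring
    _ = (∑ z ∈ S, p z.1 z.2 *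
          Real.log (p z.1 z.2 / ((∑ y', p z.1 y') * (∑ x', p x' z.2)))) / Real.log 2 := by
        congr 1
        refine (Finset.sum_subset (Finset.subset_univ S) ?_).symm
        intro z _ hz
        rw [hpos z hz, zero_mul]
    _ ≤ Real.log (∑ z ∈ S, p z.1 z.2 *
          (p z.1 z.2 / ((∑ y', p z.1 y') * (∑ x', p x' z.2)))) / Real.log 2 := by
        rw [div_le_div_iff_of_pos_right hlog2]
        exact J
    _ = Real.logb 2 (∑ z ∈ S, p z.1 z.2 *
          (p z.1 z.2 / ((∑ y', p z.1 y') * (∑ x', p x' z.2)))) := by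
        rw [Real.logb]
    _ = Real.logb 2 (∑ x, ∑ y, p x y ^ 2 / ((∑ y', p x y') * (∑ x', p x' y))) := by
        congr 1
        rw [← sum_prod_eq (fun x y => p x y ^ 2 / ((∑ y', p x y') * (∑ x', p x' y)))]
        rw [Finset.sum_subset (Finset.subset_univ S)
          (fun z _ hz => by rw [hpos z hz, zero_mul])]
        refine Finset.sum_congr rfl fun z _ => ?_
        rw [sq, mul_div_assoc]

/-- Chi-squared identity : `∑ p²/(qr) = ‖M‖_F² + 1`. -/
lemma chisq_identity {X Y : Type*} [Fintype X] [Fintype Y]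
    (p : X → Y → ℝ) (hsum : ∑ x, ∑ y, p x y = 1)
    (hX : ∀ x, 0 < ∑ y, p x y) (hY : ∀ y, 0 < ∑ x, p x y) :
    (∑ x, ∑ y, p x y ^ 2 / ((∑ y', p x y') * (∑ x', p x' y))) =
    (∑ x, ∑ y, (hgrM p x y) ^ 2) + 1 := by
  have hr1 : (∑ y, ∑ x, p x y) = 1 := by rw [Finset.sum_comm]; exact hsum
  have key : ∀ x y, (hgrM p x y) ^ 2 =
      p x y ^ 2 / ((∑ y', p x y') * (∑ x', p x' y)) - 2 * p x y +
        (∑ y', p x y') * (∑ x', p x' y) := by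
    intro x y
    rw [hgrM]
    exact helper7 _ _ _ (hX x) (hY y)
  have expand : (∑ x, ∑ y, (hgrM p x y) ^ 2) =
      (∑ x, ∑ y, p x y ^ 2 / ((∑ y', p x y') * (∑ x', p x' y))) - 2 + 1 := by
    have e1 : (∑ x, ∑ y, (hgrM p x y) ^ 2) =
        (∑ x, ∑ y, p x y ^ 2 / ((∑ y', p x y') * (∑ x', p x' y))) -
          2 * (∑ x, ∑ y, p x y) + ∑ x, ∑ y, (∑ y', p x y') * (∑ x', p x' y) := by
      have innerx : ∀ x, (∑ y, (hgrM p x y) ^ 2) =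
          (∑ y, p x y ^ 2 / ((∑ y', p x y') * (∑ x', p x' y))) - 2 * (∑ y, p x y) +
            ∑ y, (∑ y', p x y') * (∑ x', p x' y) := by
        intro x
        rw [Finset.mul_sum, ← Finset.sum_sub_distrib, ← Finset.sum_add_distrib]
        exact Finset.sum_congr rfl fun y _ => key x y
      rw [Finset.mul_sum, ← Finset.sum_sub_distrib, ← Finset.sum_add_distrib]
      exact Finset.sum_congr rfl fun x _ => innerx x
    have e2 : (∑ x, ∑ y, (∑ y', p x y') * (∑ x', p x' y)) = 1 := by
      have e3 : ∀ x, (∑ y, (∑ y', p x y') * (∑ x', p x' y)) = (∑ y', p x y') := by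
        intro x
        rw [← Finset.mul_sum, hr1, mul_one]
      rw [Finset.sum_congr rfl fun x _ => e3 x]
      exact hsum
    rw [e1, e2, hsum, mul_one]
  rw [expand]
  ring

theorem stmt4 {X Y : Type*} [Fintype X] [Fintype Y]
    (p : X → Y → ℝ) (hp : ∀ x y, 0 ≤ p x y) (hsum : ∑ x, ∑ y, p x y = 1)
    (hX : ∀ x, 0 < ∑ y, p x y) (hY : ∀ y, 0 < ∑ x, p x y)
    (hcX : 2 ≤ Fintype.card X) (hcY : 2 ≤ Fintype.card Y) :
    (∑ x, ∑ y, p x y * Real.logb 2 (p x y / ((∑ y', p x y') * (∑ x', p x' y)))) ≤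
    Real.logb 2 ((((min (Fintype.card X) (Fintype.card Y) : ℕ) : ℝ) - 1) *
      (maxCorr p) ^ 2 + 1) := by
  have hM_nonneg : 0 ≤ ∑ x, ∑ y, (hgrM p x y) ^ 2 :=
    Finset.sum_nonneg fun x _ => Finset.sum_nonneg fun y _ => sq_nonneg _
  have frob : (∑ x, ∑ y, (hgrM p x y) ^ 2) ≤
      (((min (Fintype.card X) (Fintype.card Y) : ℕ) : ℝ) - 1) * (maxCorr p) ^ 2 := by
    rcases le_total (Fintype.card X) (Fintype.card Y) with hle | hle
    · have hswap := hgr_frobenius (fun y x => p x y) (fun y x => hp x y)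
        (by rw [Finset.sum_comm]; exact hsum) hY hX
      rw [min_eq_left hle]
      calc (∑ x, ∑ y, (hgrM p x y) ^ 2) = ∑ y, ∑ x, (hgrM (fun y x => p x y) y x) ^ 2 := by
            rw [Finset.sum_comm]
            exact Finset.sum_congr rfl fun y _ => Finset.sum_congr rfl fun x _ =>
              by rw [hgrM_swap]
        _ ≤ ((Fintype.card X : ℝ) - 1) * (maxCorr (fun y x => p x y)) ^ 2 := hswap
        _ = ((Fintype.card X : ℝ) - 1) * (maxCorr p) ^ 2 := by rw [maxCorr_swap]
    · rw [min_eq_right hle]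
      exact hgr_frobenius p hp hsum hX hY
  calc (∑ x, ∑ y, p x y * Real.logb 2 (p x y / ((∑ y', p x y') * (∑ x', p x' y))))
      ≤ Real.logb 2 (∑ x, ∑ y, p x y ^ 2 / ((∑ y', p x y') * (∑ x', p x' y))) :=
        jensen_bound p hp hsum hX hY
    _ = Real.logb 2 ((∑ x, ∑ y, (hgrM p x y) ^ 2) + 1) := by
        rw [chisq_identity p hsum hX hY]
    _ ≤ Real.logb 2 ((((min (Fintype.card X) (Fintype.card Y) : ℕ) : ℝ) - 1) *
          (maxCorr p) ^ 2 + 1) := by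
        refine Real.logb_le_logb_of_le (by norm_num) (by linarith) (by linarith)
end

section
/- Consider a (possibly probabilistic) cipher with message M uniform on [1:2ⁿ], key K uniform on [1:2ˢ] independent of M, local randomness W independent of (M,K), ciphertext C = E(K,M,W), and decryption satisfying D(k, E(k,m,w)) = m for all k,m,w. If ρ_m(M;C) ≤ ρ then s ≥ log₂(1/(ρ² + 2⁻ⁿ)). -/
open BigOperators Finset
open scoped Classical

/-- Any admissible correlation value is at most `maxCorr`. -/
lemma le_maxCorr {X Y : Type*} [Fintype X] [Fintype Y] (p : X → Y → ℝ)
    (hp0 : ∀ x y, 0 ≤ p x y) (f : X → ℝ) (g : Y → ℝ)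
    (h1 : (∑ x, ∑ y, p x y * f x) = 0)
    (h2 : (∑ x, ∑ y, p x y * g y) = 0)
    (h3 : (∑ x, ∑ y, p x y * (f x) ^ 2) = 1)
    (h4 : (∑ x, ∑ y, p x y * (g y) ^ 2) = 1) :
    (∑ x, ∑ y, p x y * f x * g y) ≤ maxCorr p := by
  apply le_csSup
  · refine ⟨1, ?_⟩
    rintro r ⟨f, g, hf0, hg0, hf2, hg2, rfl⟩
    have key := Finset.sum_mul_sq_le_sq_mul_sq Finset.univ
      (fun z : X × Y => Real.sqrt (p z.1 z.2) * f z.1)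
      (fun z : X × Y => Real.sqrt (p z.1 z.2) * g z.2)
    have e1 : ∀ z : X × Y, (Real.sqrt (p z.1 z.2) * f z.1) * (Real.sqrt (p z.1 z.2) * g z.2)
        = p z.1 z.2 * f z.1 * g z.2 := by
      intro z
      rw [mul_mul_mul_comm, Real.mul_self_sqrt (hp0 _ _)]; ring
    have e2 : ∀ z : X × Y, (Real.sqrt (p z.1 z.2) * f z.1) ^ 2 = p z.1 z.2 * (f z.1) ^ 2 := by
      intro z; rw [mul_pow, Real.sq_sqrt (hp0 _ _)]
    have e3 : ∀ z : X × Y, (Real.sqrt (p z.1 z.2) * g z.2) ^ 2 = p z.1 z.2 * (g z.2) ^ 2 := by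
      intro z; rw [mul_pow, Real.sq_sqrt (hp0 _ _)]
    simp_rw [e1, e2, e3, Fintype.sum_prod_type] at key
    rw [hf2, hg2] at key
    nlinarith [key]
  · exact ⟨f, g, h1, h2, h3, h4, rfl⟩

/-- The key spectral step: each "χ²-component" is at most `ρ² · N⁻¹(1-N⁻¹)`. -/
lemma Tm_le {M C : Type*} [Fintype M] [Fintype C] (p : M → C → ℝ) (N : ℝ)
    (hcard : (Fintype.card M : ℝ) = N)
    (hp0 : ∀ m c, 0 ≤ p m c)
    (hrow : ∀ m, ∑ c, p m c = N⁻¹)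
    (hN : 1 < N)
    (ρ : ℝ) (hρ : maxCorr p ≤ ρ) (m₀ : M) :
    (∑ c, (p m₀ c - N⁻¹ * ∑ m, p m c) ^ 2 / (∑ m, p m c))
      ≤ ρ ^ 2 * (N⁻¹ * (1 - N⁻¹)) := by
  have hN0 : (0:ℝ) < N := by linarith
  have hNi : 0 < N⁻¹ := by positivity
  have hNi1 : N⁻¹ < 1 := by
    rw [inv_lt_one_iff₀]; right; exact hN
  have hβ : (0:ℝ) < N⁻¹ * (1 - N⁻¹) := by nlinarith
  set q : C → ℝ := fun c => ∑ m, p m c with hq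
  have hq0 : ∀ c, 0 ≤ q c := fun c => Finset.sum_nonneg (fun m _ => hp0 m c)
  have hqz : ∀ c, q c = 0 → ∀ m, p m c = 0 := by
    intro c hc m
    have := (Finset.sum_eq_zero_iff_of_nonneg (fun m _ => hp0 m c)).1 hc
    exact this m (Finset.mem_univ m)
  have hqsum : ∑ c, q c = 1 := by
    rw [hq, Finset.sum_comm]
    simp_rw [hrow]
    rw [Finset.sum_const, Finset.card_univ, nsmul_eq_mul, hcard]
    field_simp
  set u : C → ℝ := fun c => p m₀ c - N⁻¹ * q c with hu
  have huz : ∀ c, q c = 0 → u c = 0 := by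
    intro c hc; simp [hu, hqz c hc m₀, hc]
  have husum : ∑ c, u c = 0 := by
    simp only [hu, Finset.sum_sub_distrib, ← Finset.mul_sum, hqsum, hrow m₀]
    ring
  set T : ℝ := ∑ c, (u c) ^ 2 / q c with hT
  have hT0 : 0 ≤ T := Finset.sum_nonneg fun c _ => div_nonneg (sq_nonneg _) (hq0 c)
  rcases eq_or_lt_of_le hT0 with hTz | hTp
  · rw [← hTz]; positivity
  · -- the main case : T > 0
    set sT := Real.sqrt T with hsT
    set sβ := Real.sqrt (N⁻¹ * (1 - N⁻¹)) with hsβ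
    have hsTp : 0 < sT := Real.sqrt_pos.2 hTp
    have hsβp : 0 < sβ := Real.sqrt_pos.2 hβ
    have hsT2 : sT ^ 2 = T := Real.sq_sqrt hT0
    have hsβ2 : sβ ^ 2 = N⁻¹ * (1 - N⁻¹) := Real.sq_sqrt hβ.le
    set f : M → ℝ := fun m => ((if m = m₀ then (1:ℝ) else 0) - N⁻¹) / sβ with hf
    set g : C → ℝ := fun c => u c / q c / sT with hg
    have A1 : ∀ c, q c * g c = u c / sT := by
      intro c
      by_cases hc : q c = 0
      · simp [hg, hc, huz c hc]
      · rw [hg]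
        field_simp
    have A2 : ∀ c, q c * (g c) ^ 2 = (u c) ^ 2 / q c / T := by
      intro c
      by_cases hc : q c = 0
      · simp [hg, hc, huz c hc]
      · rw [hg]
        field_simp
        rw [← hsT2]
    have A3 : ∀ c, g c * u c = (u c) ^ 2 / q c / sT := by
      intro c
      by_cases hc : q c = 0
      · simp [hg, hc, huz c hc]
      · rw [hg]; field_simp
    have hsumf : ∑ m, f m = 0 := by
      simp only [hf, ← Finset.sum_div, Finset.sum_sub_distrib]
      rw [Finset.sum_ite_eq' Finset.univ m₀ (fun _ => (1:ℝ))]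
      simp [Finset.card_univ, hcard, div_eq_zero_iff]
      left
      field_simp
      norm_num
    have hsumfsq : ∑ m, ((if m = m₀ then (1:ℝ) else 0) - N⁻¹) ^ 2 = 1 - N⁻¹ := by
      have e : ∀ m, ((if m = m₀ then (1:ℝ) else 0) - N⁻¹) ^ 2
          = (if m = m₀ then (1 - 2 * N⁻¹) else 0) + N⁻¹ ^ 2 := by
        intro m; by_cases h : m = m₀ <;> simp [h] <;> ring
      simp_rw [e]
      rw [Finset.sum_add_distrib, Finset.sum_ite_eq' Finset.univ m₀ (fun _ => (1 - 2*N⁻¹))]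
      simp [Finset.card_univ, hcard]
      field_simp
      ring
    -- membership conditions
    have c1 : (∑ m, ∑ c, p m c * f m) = 0 := by
      have : ∀ m, ∑ c, p m c * f m = N⁻¹ * f m := by
        intro m; rw [← Finset.sum_mul, hrow]
      simp_rw [this, ← Finset.mul_sum, hsumf, mul_zero]
    have c2 : (∑ m, ∑ c, p m c * g c) = 0 := by
      rw [Finset.sum_comm]
      have : ∀ c, ∑ m, p m c * g c = q c * g c := by
        intro c; rw [← Finset.sum_mul]
      simp_rw [this, A1, ← Finset.sum_div, husum, zero_div]
    have c3 : (∑ m, ∑ c, p m c * (f m) ^ 2) = 1 := by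
      have : ∀ m, ∑ c, p m c * (f m) ^ 2 = N⁻¹ * (f m) ^ 2 := by
        intro m; rw [← Finset.sum_mul, hrow]
      simp_rw [this, ← Finset.mul_sum, hf, div_pow, ← Finset.sum_div, hsumfsq, hsβ2]
      rw [mul_div_assoc']
      exact div_self hβ.ne'
    have c4 : (∑ m, ∑ c, p m c * (g c) ^ 2) = 1 := by
      rw [Finset.sum_comm]
      have : ∀ c, ∑ m, p m c * (g c) ^ 2 = q c * (g c) ^ 2 := by
        intro c; rw [← Finset.sum_mul]
      simp_rw [this, A2, ← Finset.sum_div, ← hT]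
      exact div_self hTp.ne'
    have c5 : (∑ m, ∑ c, p m c * f m * g c) = sT / sβ := by
      rw [Finset.sum_comm]
      have inner : ∀ c, ∑ m, p m c * f m = u c / sβ := by
        intro c
        have e : ∀ m, p m c * f m
            = (p m c * (if m = m₀ then (1:ℝ) else 0) - p m c * N⁻¹) / sβ := by
          intro m; rw [hf]; ring
        rw [Finset.sum_congr rfl (fun m _ => e m), ← Finset.sum_div]
        congr 1
        have e1 : ∑ m, p m c * (if m = m₀ then (1:ℝ) else 0) = p m₀ c := by
          simp
        have e2 : ∑ m, p m c * N⁻¹ = q c * N⁻¹ := by rw [← Finset.sum_mul]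
        rw [Finset.sum_sub_distrib, e1, e2, hu]
        ring
      have : ∀ c, ∑ m, p m c * f m * g c = g c * u c / sβ := by
        intro c
        rw [← Finset.sum_mul, inner c]; ring
      have e : ∀ c, g c * u c / sβ = ((u c) ^ 2 / q c) / (sT * sβ) := by
        intro c; rw [A3 c, div_div]
      simp_rw [this, e, ← Finset.sum_div, ← hT]
      rw [← hsT2, sq, mul_div_mul_left _ _ hsTp.ne']
    have hr : sT / sβ ≤ ρ := by
      have := le_maxCorr p hp0 f g c1 c2 c3 c4
      rw [c5] at this
      exact this.trans hρ
    have hr0 : 0 ≤ sT / sβ := by positivity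
    have hsq : (sT / sβ) ^ 2 ≤ ρ ^ 2 := by nlinarith
    rw [div_pow, hsT2, hsβ2] at hsq
    have h := mul_le_mul_of_nonneg_right hsq hβ.le
    rwa [div_mul_cancel₀ _ hβ.ne'] at h

theorem stmt5 {W C : Type*} [Fintype W] [Fintype C] (n s : ℕ)
    (pW : W → ℝ) (hpW : ∀ w, 0 ≤ pW w) (hpW1 : ∑ w, pW w = 1)
    (E : Fin (2 ^ s) → Fin (2 ^ n) → W → C) (D : Fin (2 ^ s) → C → Fin (2 ^ n))
    (hD : ∀ k m w, D k (E k m w) = m) (ρ : ℝ)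
    (hρ : maxCorr (fun (m : Fin (2 ^ n)) (c : C) =>
      ∑ k, ∑ w, ((2 ^ n : ℝ))⁻¹ * ((2 ^ s : ℝ))⁻¹ * pW w *
        (if E k m w = c then 1 else 0)) ≤ ρ) :
    Real.logb 2 (1 / (ρ ^ 2 + ((2 ^ n : ℝ))⁻¹)) ≤ (s : ℝ) := by
  have hx : (0:ℝ) < ρ ^ 2 + ((2 ^ n : ℝ))⁻¹ := by positivity
  suffices key : ((2 ^ s : ℝ))⁻¹ ≤ ρ ^ 2 + ((2 ^ n : ℝ))⁻¹ by
    rw [Real.logb_le_iff_le_rpow (by norm_num) (by positivity)]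
    rw [Real.rpow_natCast]
    rw [div_le_iff₀ hx]
    have h2s : (0:ℝ) < 2 ^ s := by positivity
    calc (1:ℝ) = 2 ^ s * (2 ^ s : ℝ)⁻¹ := by field_simp
      _ ≤ 2 ^ s * (ρ ^ 2 + ((2 ^ n : ℝ))⁻¹) := by
          apply mul_le_mul_of_nonneg_left key h2s.le
  by_cases hsn : ((2 ^ s : ℝ))⁻¹ ≤ ((2 ^ n : ℝ))⁻¹
  · nlinarith [sq_nonneg ρ]
  push_neg at hsn
  have h2n1 : (1:ℝ) < 2 ^ n := by
    have h1 : ((2 ^ s : ℝ))⁻¹ ≤ 1 := by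
      rw [inv_le_one_iff₀]; right; exact one_le_pow₀ (by norm_num)
    have h2 : ((2 ^ n : ℝ))⁻¹ < 1 := lt_of_lt_of_le hsn h1
    rw [inv_lt_one_iff₀] at h2
    rcases h2 with h | h
    · nlinarith [pow_pos (by norm_num : (0:ℝ) < 2) n]
    · exact h
  set N : ℝ := (2:ℝ) ^ n with hNdef
  set p : Fin (2 ^ n) → C → ℝ := fun m c =>
      ∑ k, ∑ w, ((2 ^ n : ℝ))⁻¹ * ((2 ^ s : ℝ))⁻¹ * pW w *
        (if E k m w = c then 1 else 0) with hpdef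
  have hp0 : ∀ m c, 0 ≤ p m c := by
    intro m c
    apply Finset.sum_nonneg; intro k _
    apply Finset.sum_nonneg; intro w _
    have := hpW w
    positivity
  have hrow : ∀ m, ∑ c, p m c = N⁻¹ := by
    intro m
    rw [hpdef]
    rw [Finset.sum_comm]
    have : ∀ k : Fin (2^s), ∑ c, ∑ w, ((2 ^ n : ℝ))⁻¹ * ((2 ^ s : ℝ))⁻¹ * pW w *
        (if E k m w = c then 1 else 0) = N⁻¹ * ((2 ^ s : ℝ))⁻¹ := by
      intro k
      rw [Finset.sum_comm]
      have inner : ∀ w, ∑ c, ((2 ^ n : ℝ))⁻¹ * ((2 ^ s : ℝ))⁻¹ * pW w *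
          (if E k m w = c then 1 else 0) = N⁻¹ * ((2 ^ s : ℝ))⁻¹ * pW w := by
        intro w
        rw [← Finset.mul_sum, Finset.sum_ite_eq Finset.univ (E k m w) (fun _ => (1:ℝ))]
        simp [hNdef]
      simp_rw [inner]
      rw [← Finset.mul_sum, hpW1, mul_one]
    simp_rw [this]
    rw [Finset.sum_const, Finset.card_univ, Fintype.card_fin, nsmul_eq_mul]
    have h2s : ((2:ℝ) ^ s) ≠ 0 := by positivity
    push_cast
    field_simp
  have hcard : (Fintype.card (Fin (2^n)) : ℝ) = N := by
    simp [hNdef]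
  -- support bound: for fixed c, p m c = 0 unless m ∈ image (fun k => D k c)
  have hsupp : ∀ c : C, ∀ m : Fin (2^n), m ∉ Finset.image (fun k => D k c) Finset.univ →
      p m c = 0 := by
    intro c m hm
    rw [hpdef]
    apply Finset.sum_eq_zero; intro k _
    apply Finset.sum_eq_zero; intro w _
    have : E k m w ≠ c := by
      intro h
      apply hm
      refine Finset.mem_image.2 ⟨k, Finset.mem_univ k, ?_⟩
      rw [← h, hD]
    simp [this]
  set q : C → ℝ := fun c => ∑ m, p m c with hq
  have hq0 : ∀ c, 0 ≤ q c := fun c => Finset.sum_nonneg (fun m _ => hp0 m c)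
  have hqsum : ∑ c, q c = 1 := by
    rw [hq, Finset.sum_comm]
    simp_rw [hrow]
    rw [Finset.sum_const, Finset.card_univ, Fintype.card_fin, nsmul_eq_mul]
    push_cast
    rw [hNdef]
    field_simp
  -- per-c Cauchy–Schwarz with support bound
  have hCS : ∀ c, (q c) ^ 2 ≤ (2 ^ s : ℝ) * ∑ m, (p m c) ^ 2 := by
    intro c
    set Sc := Finset.image (fun k => D k c) Finset.univ with hSc
    have hqe : q c = ∑ m ∈ Sc, p m c := by
      rw [hq]
      symm
      apply Finset.sum_subset (Finset.subset_univ Sc)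
      intro m _ hm
      exact hsupp c m hm
    have h1 : (∑ m ∈ Sc, p m c) ^ 2 ≤ (Sc.card : ℝ) * ∑ m ∈ Sc, (p m c) ^ 2 := by
      exact_mod_cast sq_sum_le_card_mul_sum_sq (s := Sc) (f := fun m => p m c)
    have h2 : (Sc.card : ℝ) ≤ (2 ^ s : ℝ) := by
      have := Finset.card_image_le (f := fun k => D k c) (s := Finset.univ)
      have h3 : Sc.card ≤ 2 ^ s := by
        simpa [hSc] using this
      exact_mod_cast h3
    have h4 : ∑ m ∈ Sc, (p m c) ^ 2 ≤ ∑ m, (p m c) ^ 2 :=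
      Finset.sum_le_sum_of_subset_of_nonneg (Finset.subset_univ Sc)
        (fun m _ _ => sq_nonneg _)
    have h5 : (0:ℝ) ≤ ∑ m ∈ Sc, (p m c)^2 := Finset.sum_nonneg fun m _ => sq_nonneg _
    calc (q c)^2 = (∑ m ∈ Sc, p m c) ^ 2 := by rw [hqe]
      _ ≤ (Sc.card : ℝ) * ∑ m ∈ Sc, (p m c) ^ 2 := h1
      _ ≤ (2 ^ s : ℝ) * ∑ m ∈ Sc, (p m c) ^ 2 := by
          apply mul_le_mul_of_nonneg_right h2 h5
      _ ≤ (2 ^ s : ℝ) * ∑ m, (p m c) ^ 2 := by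
          apply mul_le_mul_of_nonneg_left h4 (by positivity)
  -- the χ² lower bound per c
  have hlow : ∀ c, (((2 ^ s:ℝ))⁻¹ - N⁻¹) * q c ≤ ∑ m, (p m c - N⁻¹ * q c) ^ 2 / q c := by
    intro c
    by_cases hc : q c = 0
    · have : ∀ m, p m c = 0 := by
        intro m
        have := (Finset.sum_eq_zero_iff_of_nonneg (fun m _ => hp0 m c)).1 hc
        exact this m (Finset.mem_univ m)
      simp [hc, this]
    · have hqp : 0 < q c := lt_of_le_of_ne (hq0 c) (Ne.symm hc)
      have hid : ∑ m, (p m c - N⁻¹ * q c) ^ 2 = (∑ m, (p m c)^2) - N⁻¹ * (q c)^2 := by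
        have hqc : ∑ m, p m c = q c := rfl
        have e : ∀ m, (p m c - N⁻¹ * q c) ^ 2
            = (p m c)^2 - (2 * N⁻¹ * q c) * p m c + N⁻¹^2 * (q c)^2 := by
          intro m; ring
        rw [Finset.sum_congr rfl (fun m _ => e m), Finset.sum_add_distrib,
          Finset.sum_sub_distrib, ← Finset.mul_sum, hqc, Finset.sum_const,
          Finset.card_univ, Fintype.card_fin, nsmul_eq_mul]
        have hN0 : N ≠ 0 := by rw [hNdef]; positivity
        have hcast : ((2^n : ℕ) : ℝ) = N := by rw [hNdef]; push_cast; ring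
        rw [hcast]
        field_simp
        ring
      rw [← Finset.sum_div, hid]
      rw [le_div_iff₀ hqp]
      have := hCS c
      have h2s : (0:ℝ) < 2 ^ s := by positivity
      have hkey : ((2 ^ s:ℝ))⁻¹ * (q c)^2 ≤ ∑ m, (p m c)^2 := by
        rw [inv_mul_le_iff₀ h2s]
        exact this
      nlinarith [hkey]
  -- sum over c of lower bound, combined with Tm_le summed over m₀
  have hTle : ∀ m₀, (∑ c, (p m₀ c - N⁻¹ * q c) ^ 2 / q c)
      ≤ ρ ^ 2 * (N⁻¹ * (1 - N⁻¹)) := by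
    intro m₀
    exact Tm_le p N hcard hp0 hrow h2n1 ρ hρ m₀
  have hsum1 : ∑ m₀, ∑ c, (p m₀ c - N⁻¹ * q c) ^ 2 / q c
      ≤ N * (ρ ^ 2 * (N⁻¹ * (1 - N⁻¹))) := by
    calc ∑ m₀, ∑ c, (p m₀ c - N⁻¹ * q c) ^ 2 / q c
        ≤ ∑ _m₀ : Fin (2^n), ρ ^ 2 * (N⁻¹ * (1 - N⁻¹)) := Finset.sum_le_sum fun m₀ _ => hTle m₀
      _ = N * (ρ ^ 2 * (N⁻¹ * (1 - N⁻¹))) := by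
          rw [Finset.sum_const, Finset.card_univ, Fintype.card_fin, nsmul_eq_mul]
          congr 1
          rw [hNdef]; push_cast; ring
  have hsum2 : ((2 ^ s:ℝ))⁻¹ - N⁻¹ ≤ ∑ m₀, ∑ c, (p m₀ c - N⁻¹ * q c) ^ 2 / q c := by
    rw [Finset.sum_comm]
    calc ((2 ^ s:ℝ))⁻¹ - N⁻¹ = ∑ c, (((2 ^ s:ℝ))⁻¹ - N⁻¹) * q c := by
          rw [← Finset.mul_sum, hqsum, mul_one]
      _ ≤ ∑ c, ∑ m₀, (p m₀ c - N⁻¹ * q c) ^ 2 / q c :=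
          Finset.sum_le_sum fun c _ => hlow c
  have hN0 : (0:ℝ) < N := by linarith
  have hNinv0 : (0:ℝ) < N⁻¹ := by positivity
  have hfinal : ((2 ^ s:ℝ))⁻¹ - N⁻¹ ≤ ρ ^ 2 * (1 - N⁻¹) := by
    have := hsum2.trans hsum1
    have he : N * (ρ ^ 2 * (N⁻¹ * (1 - N⁻¹))) = ρ ^ 2 * (1 - N⁻¹) := by
      field_simp
    rw [he] at this
    exact this
  have : ρ ^ 2 * (1 - N⁻¹) ≤ ρ ^ 2 := by nlinarith [sq_nonneg ρ]
  have hNn : N⁻¹ = ((2 ^ n : ℝ))⁻¹ := by rw [hNdef]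
  rw [hNn] at hfinal this
  linarith
end

section
/- Let G be a d-regular (multi)graph on vertex set [1:2ⁿ] with adjacency matrix A, whose edges are labeled by an invertible encryption function E(k,m) (so the edges are (m, E(k,m)) for k ∈ [1:d], and D(k,E(k,m)) = m). Let M be uniform on [1:2ⁿ], K uniform on [1:d] independent of M, and C = E(K,M). Then ρ_m(M;C) = |λ₂(A)|/d, where |λ₂(A)| = ‖A − (d/2ⁿ)·𝟏‖ is the magnitude of the second-largest eigenvalue of A in absolute value. -/
open BigOperators Finset
open scoped Classical

lemma main_aux {X : Type*} [Fintype X] (N dd : ℝ) (hN : 0 < N) (hdd : 0 < dd)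
    (hcard : (Fintype.card X : ℝ) = N) (A : X → X → ℝ) (hA : ∀ m c, 0 ≤ A m c)
    (hrow : ∀ m, ∑ c, A m c = dd) (hcol : ∀ c, ∑ m, A m c = dd) :
    maxCorr (fun m c => N⁻¹ * dd⁻¹ * A m c) =
    (1 / dd) * specNorm (Matrix.of fun m c => A m c - dd / N) := by
  have hN' : N ≠ 0 := ne_of_gt hN
  have hdd' : dd ≠ 0 := ne_of_gt hdd
  set p : X → X → ℝ := fun m c => N⁻¹ * dd⁻¹ * A m c with hp
  set B : Matrix X X ℝ := Matrix.of fun m c => A m c - dd / N with hB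
  have hBapp : ∀ m c, B m c = A m c - dd / N := fun m c => rfl
  -- row/col sums of B vanish
  have hrowB : ∀ m, ∑ c, B m c = 0 := by
    intro m
    simp only [hBapp]
    rw [Finset.sum_sub_distrib, hrow, Finset.sum_const, card_univ, nsmul_eq_mul, hcard]
    field_simp
    ring
  have hcolB : ∀ c, ∑ m, B m c = 0 := by
    intro c
    simp only [hBapp]
    rw [Finset.sum_sub_distrib, hcol, Finset.sum_const, card_univ, nsmul_eq_mul, hcard]
    field_simp
    ring
  -- marginals of p
  have hmr : ∀ m, ∑ c, p m c = N⁻¹ := by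
    intro m; rw [hp, ← Finset.mul_sum, hrow]; field_simp
  have hmc : ∀ c, ∑ m, p m c = N⁻¹ := by
    intro c; rw [hp, ← Finset.mul_sum, hcol]; field_simp
  have hsum_f : ∀ f : X → ℝ, (∑ m, ∑ c, p m c * f m) = N⁻¹ * ∑ m, f m := by
    intro f
    calc ∑ m, ∑ c, p m c * f m = ∑ m, N⁻¹ * f m := by
          refine Finset.sum_congr rfl fun m _ => ?_
          rw [← Finset.sum_mul, hmr m]
      _ = N⁻¹ * ∑ m, f m := (Finset.mul_sum _ _ _).symm
  have hsum_g : ∀ g : X → ℝ, (∑ m, ∑ c, p m c * g c) = N⁻¹ * ∑ c, g c := by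
    intro g
    rw [Finset.sum_comm]
    calc ∑ c, ∑ m, p m c * g c = ∑ c, N⁻¹ * g c := by
          refine Finset.sum_congr rfl fun c _ => ?_
          rw [← Finset.sum_mul, hmc c]
      _ = N⁻¹ * ∑ c, g c := (Finset.mul_sum _ _ _).symm
  have hpnn : ∀ m c, 0 ≤ p m c := fun m c =>
    mul_nonneg (mul_nonneg (inv_nonneg.mpr hN.le) (inv_nonneg.mpr hdd.le)) (hA m c)
  -- bilinear identity
  have hbilin : ∀ f g : X → ℝ, (∑ m, f m = 0) →
      (∑ m, ∑ c, p m c * f m * g c) = N⁻¹ * dd⁻¹ * ∑ m, f m * B.mulVec g m := by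
    intro f g hf
    have h1 : ∀ m c, p m c * f m * g c
        = N⁻¹ * dd⁻¹ * (B m c * f m * g c) + (N⁻¹ * dd⁻¹ * (dd / N)) * (f m * g c) := by
      intro m c; simp only [hp, hBapp]; ring
    simp_rw [h1, Finset.sum_add_distrib, ← Finset.mul_sum]
    rw [← Finset.sum_mul, hf, zero_mul, mul_zero, add_zero]
    congr 1
    refine Finset.sum_congr rfl fun m _ => ?_
    simp only [Matrix.mulVec, dotProduct]
    rw [Finset.mul_sum]
    exact Finset.sum_congr rfl fun c _ => by ring
  -- sum of B.mulVec v is zero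
  have hBv_sum : ∀ v : X → ℝ, ∑ m, B.mulVec v m = 0 := by
    intro v
    simp only [Matrix.mulVec, dotProduct]
    rw [Finset.sum_comm]
    refine Finset.sum_eq_zero fun c _ => ?_
    rw [← Finset.sum_mul, hcolB c, zero_mul]
  -- B kills constants
  have hBconst : ∀ (v : X → ℝ) (t : ℝ) (m : X),
      B.mulVec (fun c => v c - t) m = B.mulVec v m := by
    intro v t m
    simp only [Matrix.mulVec, dotProduct]
    simp_rw [mul_sub]
    rw [Finset.sum_sub_distrib, ← Finset.sum_mul, hrowB m, zero_mul, sub_zero]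
  -- the defining sets
  set MC : Set ℝ := {r : ℝ | ∃ f : X → ℝ, ∃ g : X → ℝ,
    (∑ x, ∑ y, p x y * f x) = 0 ∧
    (∑ x, ∑ y, p x y * g y) = 0 ∧
    (∑ x, ∑ y, p x y * (f x) ^ 2) = 1 ∧
    (∑ x, ∑ y, p x y * (g y) ^ 2) = 1 ∧
    r = ∑ x, ∑ y, p x y * f x * g y} with hMC
  set SN : Set ℝ := {r : ℝ | ∃ v : X → ℝ, (∑ y, (v y) ^ 2) = 1 ∧
    r = Real.sqrt (∑ x, (B.mulVec v x) ^ 2)} with hSN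
  have hMdef : maxCorr p = sSup MC := rfl
  have hSdef : specNorm B = sSup SN := rfl
  -- bound on MC elements
  have hMCle : ∀ r ∈ MC, r ≤ 1 := by
    rintro r ⟨f, g, h1, h2, h3, h4, h5⟩
    set F : X × X → ℝ := fun x => Real.sqrt (p x.1 x.2) * f x.1 with hF
    set G : X × X → ℝ := fun x => Real.sqrt (p x.1 x.2) * g x.2 with hG
    have hr : r = ∑ x : X × X, F x * G x := by
      rw [h5, Fintype.sum_prod_type]
      refine Finset.sum_congr rfl fun x _ => Finset.sum_congr rfl fun y _ => ?_
      have hss := Real.mul_self_sqrt (hpnn x y)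
      calc p x y * f x * g y
          = (Real.sqrt (p x y) * Real.sqrt (p x y)) * f x * g y := by rw [hss]
        _ = (Real.sqrt (p x y) * f x) * (Real.sqrt (p x y) * g y) := by ring
    have hF2 : ∑ x : X × X, F x ^ 2 = 1 := by
      rw [Fintype.sum_prod_type, ← h3]
      refine Finset.sum_congr rfl fun x _ => Finset.sum_congr rfl fun y _ => ?_
      show (Real.sqrt (p x y) * f x) ^ 2 = p x y * f x ^ 2
      rw [mul_pow, Real.sq_sqrt (hpnn x y)]
    have hG2 : ∑ x : X × X, G x ^ 2 = 1 := by
      rw [Fintype.sum_prod_type, ← h4]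
      refine Finset.sum_congr rfl fun x _ => Finset.sum_congr rfl fun y _ => ?_
      show (Real.sqrt (p x y) * g y) ^ 2 = p x y * g y ^ 2
      rw [mul_pow, Real.sq_sqrt (hpnn x y)]
    have hcs := Finset.sum_mul_sq_le_sq_mul_sq univ F G
    rw [hF2, hG2, mul_one] at hcs
    rw [hr]
    nlinarith [hcs, sq_nonneg ((∑ x : X × X, F x * G x) - 1)]
  have hMCbdd : BddAbove MC := ⟨1, fun r hr => hMCle r hr⟩
  have hM0 : 0 ≤ maxCorr p := by
    rw [hMdef]
    rcases MC.eq_empty_or_nonempty with h | h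
    · rw [h, Real.sSup_empty]
    · obtain ⟨r, hrMC⟩ := h
      obtain ⟨f, g, h1, h2, h3, h4, h5⟩ := hrMC
      have hneg : -r ∈ MC := by
        refine ⟨f, fun c => -g c, h1, ?_, h3, ?_, ?_⟩
        · simpa [mul_neg, Finset.sum_neg_distrib] using h2
        · simpa [neg_sq] using h4
        · rw [h5]; simp [mul_neg, Finset.sum_neg_distrib]
      have t1 : r ≤ sSup MC := le_csSup hMCbdd ⟨f, g, h1, h2, h3, h4, h5⟩
      have t2 : -r ≤ sSup MC := le_csSup hMCbdd hneg
      linarith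
  -- SN facts
  have hSNne : SN.Nonempty := by
    have hpos : 0 < Fintype.card X := by
      have h0 : (0:ℝ) < (Fintype.card X : ℝ) := by rw [hcard]; exact hN
      exact_mod_cast h0
    obtain ⟨x₀⟩ := Fintype.card_pos_iff.mp hpos
    refine ⟨_, ⟨fun y => if y = x₀ then 1 else 0, ?_, rfl⟩⟩
    simp [apply_ite (fun t : ℝ => t ^ 2)]
  have hSNle : ∀ r ∈ SN, r ≤ Real.sqrt (∑ m, ∑ c, B m c ^ 2) := by
    rintro r ⟨v, hv, rfl⟩
    apply Real.sqrt_le_sqrt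
    refine Finset.sum_le_sum fun m _ => ?_
    have h := Finset.sum_mul_sq_le_sq_mul_sq univ (fun c => B m c) v
    rw [hv, mul_one] at h
    calc (B.mulVec v m) ^ 2 = (∑ c, B m c * v c) ^ 2 := by
          simp [Matrix.mulVec, dotProduct]
      _ ≤ ∑ c, B m c ^ 2 := h
  have hSNbdd : BddAbove SN := ⟨_, fun r hr => hSNle r hr⟩
  have hsp0 : 0 ≤ specNorm B := by
    obtain ⟨r, hr⟩ := hSNne
    have h1 : 0 ≤ r := by obtain ⟨v, hv, rfl⟩ := hr; exact Real.sqrt_nonneg _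
    exact h1.trans (le_csSup hSNbdd hr)
  -- Direction 1
  have dir1 : ∀ r ∈ MC, r ≤ dd⁻¹ * specNorm B := by
    rintro r ⟨f, g, h1, h2, h3, h4, h5⟩
    have hf0 : ∑ m, f m = 0 := by
      have h := (hsum_f f).symm.trans h1
      field_simp at h
      simpa using h
    have hf2 : ∑ m, f m ^ 2 = N := by
      have h : N⁻¹ * (∑ m, f m ^ 2) = 1 := (hsum_f (fun x => f x ^ 2)).symm.trans h3
      field_simp at h
      linarith
    have hg2 : ∑ c, g c ^ 2 = N := by
      have h : N⁻¹ * (∑ c, g c ^ 2) = 1 := (hsum_g (fun y => g y ^ 2)).symm.trans h4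
      field_simp at h
      linarith
    set w : X → ℝ := fun m => B.mulVec g m with hwd
    have hrw : r = N⁻¹ * dd⁻¹ * ∑ m, f m * w m := by rw [h5]; exact hbilin f g hf0
    have hw2nn : (0:ℝ) ≤ ∑ m, w m ^ 2 := Finset.sum_nonneg fun m _ => sq_nonneg _
    have hcs : ∑ m, f m * w m ≤ Real.sqrt (∑ m, f m ^ 2) * Real.sqrt (∑ m, w m ^ 2) := by
      have h := Finset.sum_mul_sq_le_sq_mul_sq univ f w
      calc ∑ m, f m * w m ≤ |∑ m, f m * w m| := le_abs_self _
        _ = Real.sqrt ((∑ m, f m * w m) ^ 2) := (Real.sqrt_sq_eq_abs _).symm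
        _ ≤ Real.sqrt ((∑ m, f m ^ 2) * ∑ m, w m ^ 2) := Real.sqrt_le_sqrt h
        _ = _ := Real.sqrt_mul (Finset.sum_nonneg fun m _ => sq_nonneg _) _
    set sN := Real.sqrt N with hsNd
    have hsNpos : 0 < sN := Real.sqrt_pos.mpr hN
    have hsNsq : sN ^ 2 = N := Real.sq_sqrt hN.le
    set v : X → ℝ := fun c => g c * sN⁻¹ with hvd
    have hv2 : (∑ y, (v y) ^ 2) = 1 := by
      simp only [hvd, mul_pow]
      rw [← Finset.sum_mul, hg2, inv_pow, hsNsq]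
      field_simp
    have hBv : ∀ m, B.mulVec v m = w m * sN⁻¹ := by
      intro m
      show (∑ c, B m c * (g c * sN⁻¹)) = (∑ c, B m c * g c) * sN⁻¹
      simp_rw [← mul_assoc]
      rw [← Finset.sum_mul]
    have hwv : Real.sqrt (∑ m, w m ^ 2) = sN * Real.sqrt (∑ m, (B.mulVec v m) ^ 2) := by
      have h1 : ∑ m, (B.mulVec v m) ^ 2 = (∑ m, w m ^ 2) * (sN⁻¹) ^ 2 := by
        simp_rw [hBv, mul_pow]
        rw [← Finset.sum_mul]
      rw [h1, Real.sqrt_mul hw2nn, Real.sqrt_sq (inv_nonneg.mpr hsNpos.le)]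
      field_simp
    have hmem : Real.sqrt (∑ m, (B.mulVec v m) ^ 2) ∈ SN := ⟨v, hv2, rfl⟩
    have hle : Real.sqrt (∑ m, (B.mulVec v m) ^ 2) ≤ specNorm B := by
      rw [hSdef]; exact le_csSup hSNbdd hmem
    have h6 : Real.sqrt (∑ m, f m ^ 2) = sN := by rw [hf2]
    calc r = N⁻¹ * dd⁻¹ * ∑ m, f m * w m := hrw
      _ ≤ N⁻¹ * dd⁻¹ * (sN * (sN * specNorm B)) := by
          refine mul_le_mul_of_nonneg_left ?_ (by positivity)
          calc ∑ m, f m * w m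
              ≤ Real.sqrt (∑ m, f m ^ 2) * Real.sqrt (∑ m, w m ^ 2) := hcs
            _ = sN * (sN * Real.sqrt (∑ m, (B.mulVec v m) ^ 2)) := by rw [h6, hwv]
            _ ≤ sN * (sN * specNorm B) := by
                exact mul_le_mul_of_nonneg_left
                  (mul_le_mul_of_nonneg_left hle hsNpos.le) hsNpos.le
      _ = dd⁻¹ * specNorm B := by
          have hss : sN * sN = N := Real.mul_self_sqrt hN.le
          rw [show sN * (sN * specNorm B) = N * specNorm B by rw [← mul_assoc, hss]]
          field_simp
  -- Direction 2
  have dir2 : ∀ r ∈ SN, r ≤ dd * maxCorr p := by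
    intro r hrSN
    obtain ⟨v, hv, hreq⟩ := hrSN
    have hr0 : 0 ≤ r := hreq ▸ Real.sqrt_nonneg _
    set w : X → ℝ := fun m => B.mulVec v m with hwd
    have hw2 : ∑ m, w m ^ 2 = r ^ 2 := by
      rw [hreq, Real.sq_sqrt (Finset.sum_nonneg fun m _ => sq_nonneg _)]
    by_cases hrz : r = 0
    · rw [hrz]; exact mul_nonneg hdd.le hM0
    have hrpos : 0 < r := lt_of_le_of_ne hr0 (Ne.symm hrz)
    have hw0 : ∑ m, w m = 0 := hBv_sum v
    set t : ℝ := N⁻¹ * ∑ c, v c with ht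
    have hvsum : ∑ c, v c = N * t := by rw [ht]; field_simp
    set v₀ : X → ℝ := fun c => v c - t with hv₀
    have hv₀sum : ∑ c, v₀ c = 0 := by
      simp only [hv₀]
      rw [Finset.sum_sub_distrib, Finset.sum_const, card_univ, nsmul_eq_mul, hcard, hvsum]
      ring
    have hv₀B : ∀ m, B.mulVec v₀ m = w m := fun m => hBconst v t m
    set s2 := ∑ c, v₀ c ^ 2 with hs2d
    have hs2exp : s2 = 1 - N * t ^ 2 := by
      have hterm : ∀ c, v₀ c ^ 2 = v c ^ 2 - (2 * t) * v c + t ^ 2 := fun c => by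
        simp only [hv₀]; ring
      calc s2 = ∑ c, (v c ^ 2 - (2 * t) * v c + t ^ 2) :=
            Finset.sum_congr rfl fun c _ => hterm c
        _ = ((∑ c, v c ^ 2) - (2 * t) * (∑ c, v c)) + (Fintype.card X : ℝ) * t ^ 2 := by
            rw [Finset.sum_add_distrib, Finset.sum_sub_distrib, ← Finset.mul_sum,
              Finset.sum_const, card_univ, nsmul_eq_mul]
        _ = 1 - N * t ^ 2 := by rw [hv, hvsum, hcard]; ring
    have hs2nn : 0 ≤ s2 := Finset.sum_nonneg fun c _ => sq_nonneg _
    have hs2le : s2 ≤ 1 := by rw [hs2exp]; nlinarith [mul_nonneg hN.le (sq_nonneg t)]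
    by_cases hs2z : s2 = 0
    · exfalso
      have hv₀z : ∀ c, v₀ c = 0 := by
        intro c
        have h2 := (Finset.sum_eq_zero_iff_of_nonneg
          (fun c _ => sq_nonneg (v₀ c))).mp (by rw [← hs2d]; exact hs2z) c (mem_univ c)
        exact pow_eq_zero_iff two_ne_zero |>.mp h2
      have hwz : ∀ m, w m = 0 := by
        intro m
        rw [← hv₀B m]
        show (∑ c, B m c * v₀ c) = 0
        exact Finset.sum_eq_zero fun c _ => by rw [hv₀z c, mul_zero]
      apply hrz
      have hr2 : r ^ 2 = 0 := by
        rw [← hw2]; exact Finset.sum_eq_zero fun m _ => by rw [hwz m]; ring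
      exact pow_eq_zero_iff two_ne_zero |>.mp hr2
    have hs2pos : 0 < s2 := lt_of_le_of_ne hs2nn (Ne.symm hs2z)
    set s := Real.sqrt s2 with hsd
    have hspos : 0 < s := Real.sqrt_pos.mpr hs2pos
    have hs1 : s ≤ 1 := by
      rw [hsd]
      calc Real.sqrt s2 ≤ Real.sqrt 1 := Real.sqrt_le_sqrt hs2le
        _ = 1 := Real.sqrt_one
    have hssq : s ^ 2 = s2 := Real.sq_sqrt hs2nn
    set sN := Real.sqrt N with hsNd
    have hsNpos : 0 < sN := Real.sqrt_pos.mpr hN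
    have hsNsq : sN ^ 2 = N := Real.sq_sqrt hN.le
    set f : X → ℝ := fun m => (sN / r) * w m with hfd
    set g : X → ℝ := fun c => (sN / s) * v₀ c with hgd
    have hfsum : ∑ m, f m = 0 := by
      simp only [hfd]; rw [← Finset.mul_sum, hw0, mul_zero]
    have hgsum : ∑ c, g c = 0 := by
      simp only [hgd]; rw [← Finset.mul_sum, hv₀sum, mul_zero]
    have c1 : (∑ x, ∑ y, p x y * f x) = 0 := by
      rw [hsum_f f, hfsum, mul_zero]
    have c2 : (∑ x, ∑ y, p x y * g y) = 0 := by
      rw [hsum_g g, hgsum, mul_zero]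
    have c3 : (∑ x, ∑ y, p x y * (f x) ^ 2) = 1 := by
      have hNf : (∑ x, ∑ y, p x y * (f x) ^ 2) = N⁻¹ * ∑ m, f m ^ 2 :=
        hsum_f (fun x => f x ^ 2)
      have hfsq : ∑ m, f m ^ 2 = N := by
        simp only [hfd, mul_pow]
        rw [← Finset.mul_sum, hw2, div_pow, hsNsq]
        field_simp
      rw [hNf, hfsq]
      field_simp
    have c4 : (∑ x, ∑ y, p x y * (g y) ^ 2) = 1 := by
      have hNg : (∑ x, ∑ y, p x y * (g y) ^ 2) = N⁻¹ * ∑ c, g c ^ 2 :=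
        hsum_g (fun y => g y ^ 2)
      have hgsq : ∑ c, g c ^ 2 = N := by
        simp only [hgd, mul_pow]
        rw [← Finset.mul_sum, ← hs2d, div_pow, hsNsq, ← hssq]
        field_simp
      rw [hNg, hgsq]
      field_simp
    have hval : (∑ x, ∑ y, p x y * f x * g y) = r / (dd * s) := by
      rw [hbilin f g hfsum]
      have hBg : ∀ m, B.mulVec g m = (sN / s) * w m := by
        intro m
        have hsc : B.mulVec g m = (sN / s) * B.mulVec v₀ m := by
          show (∑ c, B m c * ((sN / s) * v₀ c)) = (sN / s) * ∑ c, B m c * v₀ c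
          rw [Finset.mul_sum]
          exact Finset.sum_congr rfl fun c _ => by ring
        rw [hsc, hv₀B m]
      have hsum : ∑ m, f m * B.mulVec g m = (sN / r) * (sN / s) * ∑ m, w m ^ 2 := by
        rw [Finset.mul_sum]
        refine Finset.sum_congr rfl fun m _ => ?_
        rw [hBg m]
        simp only [hfd]
        ring
      rw [hsum, hw2]
      have hkey : (sN / r) * (sN / s) * r ^ 2 = N * r / s := by
        rw [← hsNsq]; field_simp
      rw [hkey]
      field_simp
    have hmemMC : r / (dd * s) ∈ MC := ⟨f, g, c1, c2, c3, c4, hval.symm⟩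
    have hleM : r / (dd * s) ≤ maxCorr p := by rw [hMdef]; exact le_csSup hMCbdd hmemMC
    have hmono : r / dd ≤ r / (dd * s) := by
      apply div_le_div_of_nonneg_left hr0 (by positivity)
      calc dd * s ≤ dd * 1 := mul_le_mul_of_nonneg_left hs1 hdd.le
        _ = dd := mul_one dd
    calc r = dd * (r / dd) := by field_simp
      _ ≤ dd * (r / (dd * s)) := mul_le_mul_of_nonneg_left hmono hdd.le
      _ ≤ dd * maxCorr p := mul_le_mul_of_nonneg_left hleM hdd.le
  -- conclusion
  have hfin1 : maxCorr p ≤ dd⁻¹ * specNorm B := by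
    rw [hMdef]; exact Real.sSup_le (fun x hx => dir1 x hx)
      (mul_nonneg (inv_nonneg.mpr hdd.le) hsp0)
  have hfin2 : specNorm B ≤ dd * maxCorr p := by
    rw [hSdef]; exact Real.sSup_le (fun x hx => dir2 x hx) (mul_nonneg hdd.le hM0)
  have hfin3 : dd⁻¹ * specNorm B ≤ maxCorr p := by
    calc dd⁻¹ * specNorm B ≤ dd⁻¹ * (dd * maxCorr p) :=
          mul_le_mul_of_nonneg_left hfin2 (inv_nonneg.mpr hdd.le)
      _ = maxCorr p := by field_simp
  rw [one_div]
  exact le_antisymm hfin1 hfin3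

theorem stmt6 (n d : ℕ) (hd : 0 < d)
    (E : Fin d → Fin (2 ^ n) → Fin (2 ^ n)) (D : Fin d → Fin (2 ^ n) → Fin (2 ^ n))
    (hD : ∀ k m, D k (E k m) = m)
    (hsym : ∀ m c : Fin (2 ^ n),
      (univ.filter fun k => E k m = c).card = (univ.filter fun k => E k c = m).card) :
    maxCorr (fun (m c : Fin (2 ^ n)) =>
        ((2 ^ n : ℝ))⁻¹ * (d : ℝ)⁻¹ * ((univ.filter fun k => E k m = c).card : ℝ)) =
    (1 / (d : ℝ)) * specNorm (Matrix.of fun m c =>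
        ((univ.filter fun k => E k m = c).card : ℝ) - (d : ℝ) / (2 ^ n : ℝ)) := by
  have hN : (0:ℝ) < 2 ^ n := by positivity
  have hdd : (0:ℝ) < d := Nat.cast_pos.mpr hd
  have hcard : ((Fintype.card (Fin (2 ^ n)) : ℕ) : ℝ) = (2 ^ n : ℝ) := by
    rw [Fintype.card_fin]; push_cast; ring
  have hrowN : ∀ m : Fin (2 ^ n), ∑ c, (univ.filter fun k => E k m = c).card = d := by
    intro m
    have h := Finset.card_eq_sum_card_fiberwise
      (f := fun k => E k m) (s := (univ : Finset (Fin d))) (t := (univ : Finset (Fin (2 ^ n))))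
      (fun x _ => mem_univ _)
    simpa [card_univ] using h.symm
  have hrow : ∀ m : Fin (2 ^ n),
      ∑ c, (((univ.filter fun k => E k m = c).card : ℕ) : ℝ) = (d : ℝ) := by
    intro m
    rw [← Nat.cast_sum]
    exact_mod_cast hrowN m
  have hcol : ∀ c : Fin (2 ^ n),
      ∑ m, (((univ.filter fun k => E k m = c).card : ℕ) : ℝ) = (d : ℝ) := by
    intro c
    have heq : ∀ m : Fin (2 ^ n), (((univ.filter fun k => E k m = c).card : ℕ) : ℝ)
        = (((univ.filter fun k => E k c = m).card : ℕ) : ℝ) := fun m => by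
      exact_mod_cast congrArg Nat.cast (hsym m c)
    rw [Finset.sum_congr rfl fun m _ => heq m]
    exact hrow c
  exact main_aux ((2:ℝ) ^ n) (d : ℝ) hN hdd hcard
    (fun m c => (((univ.filter fun k => E k m = c).card : ℕ) : ℝ))
    (fun m c => Nat.cast_nonneg _) hrow hcol
end

section
/- Rényi's second characterization of maximal correlation: for finitely supported random variables X, Y, ρ_m(X;Y) = sup over f:𝒳→ℝ with E[f(X)]=0, E[f(X)²]=1 of √(E[(E[f(X)|Y])²]). -/
open BigOperators Finset
open scoped Classical

lemma cs_weighted {ι : Type*} [Fintype ι] (w a b : ι → ℝ) (hw : ∀ i, 0 ≤ w i) :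
    (∑ i, w i * (a i * b i)) ^ 2 ≤ (∑ i, w i * a i ^ 2) * (∑ i, w i * b i ^ 2) := by
  have h := Finset.sum_mul_sq_le_sq_mul_sq Finset.univ
      (fun i => Real.sqrt (w i) * a i) (fun i => Real.sqrt (w i) * b i)
  have e1 : ∑ i, (Real.sqrt (w i) * a i) * (Real.sqrt (w i) * b i)
      = ∑ i, w i * (a i * b i) :=
    Finset.sum_congr rfl fun i _ => by
      rw [mul_mul_mul_comm, Real.mul_self_sqrt (hw i)]
  have e2 : ∑ i, (Real.sqrt (w i) * a i) ^ 2 = ∑ i, w i * a i ^ 2 :=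
    Finset.sum_congr rfl fun i _ => by rw [mul_pow, Real.sq_sqrt (hw i)]
  have e3 : ∑ i, (Real.sqrt (w i) * b i) ^ 2 = ∑ i, w i * b i ^ 2 :=
    Finset.sum_congr rfl fun i _ => by rw [mul_pow, Real.sq_sqrt (hw i)]
  rwa [e1, e2, e3] at h

/-- Conditional expectation `E[f(X) | Y = y]` for a joint pmf `p`. -/
noncomputable def cep {X Y : Type*} [Fintype X] [Fintype Y] (p : X → Y → ℝ)
    (f : X → ℝ) (y : Y) : ℝ :=
  (∑ x, p x y * f x) / (∑ x, p x y)

lemma pY_mul_cep {X Y : Type*} [Fintype X] [Fintype Y] (p : X → Y → ℝ)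
    (hY : ∀ y, 0 < ∑ x, p x y) (f : X → ℝ) (y : Y) :
    (∑ x, p x y) * cep p f y = ∑ x, p x y * f x := by
  rw [cep]; field_simp [(hY y).ne']

/-- Jensen: `∑_y pY(y) E[f|y]^2 ≤ E[f^2]`. -/
lemma jensen {X Y : Type*} [Fintype X] [Fintype Y] (p : X → Y → ℝ)
    (hp : ∀ x y, 0 ≤ p x y) (hY : ∀ y, 0 < ∑ x, p x y) (f : X → ℝ) :
    (∑ y, (∑ x, p x y) * (cep p f y) ^ 2) ≤ ∑ x, (∑ y, p x y) * f x ^ 2 := by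
  have h1 : ∀ y : Y, (∑ x, p x y) * (cep p f y) ^ 2 ≤ ∑ x, p x y * f x ^ 2 := by
    intro y
    have hcs := cs_weighted (fun x => p x y) (fun _ => 1) f (fun x => hp x y)
    simp only [one_mul, one_pow, mul_one] at hcs
    have hpy := hY y
    have he : (∑ x, p x y) * (cep p f y) ^ 2
        = (∑ x, p x y * f x) ^ 2 / (∑ x, p x y) := by
      rw [cep]; field_simp
    rw [he, div_le_iff₀ hpy]
    nlinarith [hcs]
  calc (∑ y, (∑ x, p x y) * (cep p f y) ^ 2) ≤ ∑ y, ∑ x, p x y * f x ^ 2 :=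
        Finset.sum_le_sum fun y _ => h1 y
    _ = ∑ x, ∑ y, p x y * f x ^ 2 := by rw [Finset.sum_comm]
    _ = ∑ x, (∑ y, p x y) * f x ^ 2 :=
        Finset.sum_congr rfl fun x _ => (Finset.sum_mul _ _ _).symm

theorem stmt9 {X Y : Type*} [Fintype X] [Fintype Y]
    (p : X → Y → ℝ) (hp : ∀ x y, 0 ≤ p x y) (hsum : ∑ x, ∑ y, p x y = 1)
    (hX : ∀ x, 0 < ∑ y, p x y) (hY : ∀ y, 0 < ∑ x, p x y) :
    maxCorr p = sSup {r : ℝ | ∃ f : X → ℝ,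
      (∑ x, (∑ y, p x y) * f x) = 0 ∧
      (∑ x, (∑ y, p x y) * (f x) ^ 2) = 1 ∧
      r = Real.sqrt (∑ y, (∑ x, p x y) *
        ((∑ x, p x y * f x) / (∑ x, p x y)) ^ 2)} := by
  classical
  unfold maxCorr
  set S : Set ℝ := {r : ℝ | ∃ f : X → ℝ, ∃ g : Y → ℝ,
      (∑ x, ∑ y, p x y * f x) = 0 ∧
      (∑ x, ∑ y, p x y * g y) = 0 ∧
      (∑ x, ∑ y, p x y * (f x) ^ 2) = 1 ∧
      (∑ x, ∑ y, p x y * (g y) ^ 2) = 1 ∧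
      r = ∑ x, ∑ y, p x y * f x * g y} with hSdef
  set T : Set ℝ := {r : ℝ | ∃ f : X → ℝ,
      (∑ x, (∑ y, p x y) * f x) = 0 ∧
      (∑ x, (∑ y, p x y) * (f x) ^ 2) = 1 ∧
      r = Real.sqrt (∑ y, (∑ x, p x y) *
        ((∑ x, p x y * f x) / (∑ x, p x y)) ^ 2)} with hTdef
  -- basic sum rewrites
  have hEf : ∀ f : X → ℝ, (∑ x, ∑ y, p x y * f x) = ∑ x, (∑ y, p x y) * f x :=
    fun f => Finset.sum_congr rfl fun x _ => (Finset.sum_mul _ _ _).symm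
  have hEf2 : ∀ f : X → ℝ, (∑ x, ∑ y, p x y * (f x) ^ 2) = ∑ x, (∑ y, p x y) * (f x) ^ 2 :=
    fun f => Finset.sum_congr rfl fun x _ => (Finset.sum_mul _ _ _).symm
  have hEg : ∀ g : Y → ℝ, (∑ x, ∑ y, p x y * g y) = ∑ y, (∑ x, p x y) * g y := by
    intro g
    rw [Finset.sum_comm]
    exact Finset.sum_congr rfl fun y _ => (Finset.sum_mul _ _ _).symm
  have hEg2 : ∀ g : Y → ℝ, (∑ x, ∑ y, p x y * (g y) ^ 2) = ∑ y, (∑ x, p x y) * (g y) ^ 2 := by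
    intro g
    rw [Finset.sum_comm]
    exact Finset.sum_congr rfl fun y _ => (Finset.sum_mul _ _ _).symm
  have hEfg : ∀ (f : X → ℝ) (g : Y → ℝ),
      (∑ x, ∑ y, p x y * f x * g y) = ∑ y, (∑ x, p x y) * (cep p f y * g y) := by
    intro f g
    rw [Finset.sum_comm]
    refine Finset.sum_congr rfl fun y _ => ?_
    rw [show (∑ x, p x y * f x * g y) = (∑ x, p x y * f x) * g y from
      (Finset.sum_mul _ _ _).symm, ← pY_mul_cep p hY f y, mul_assoc]
  -- value of T associated to f
  set v : (X → ℝ) → ℝ := fun f =>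
    Real.sqrt (∑ y, (∑ x, p x y) * (cep p f y) ^ 2) with hv
  have hQnonneg : ∀ f : X → ℝ, 0 ≤ ∑ y, (∑ x, p x y) * (cep p f y) ^ 2 :=
    fun f => Finset.sum_nonneg fun y _ => mul_nonneg (hY y).le (sq_nonneg _)
  have hvT : ∀ f : X → ℝ, (∑ x, (∑ y, p x y) * f x) = 0 →
      (∑ x, (∑ y, p x y) * (f x) ^ 2) = 1 → v f ∈ T := by
    intro f h1 h2
    exact ⟨f, h1, h2, rfl⟩
  have hv1 : ∀ f : X → ℝ, (∑ x, (∑ y, p x y) * (f x) ^ 2) = 1 → v f ≤ 1 := by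
    intro f h2
    rw [hv]
    calc Real.sqrt (∑ y, (∑ x, p x y) * (cep p f y) ^ 2)
        ≤ Real.sqrt (∑ x, (∑ y, p x y) * f x ^ 2) :=
          Real.sqrt_le_sqrt (jensen p hp hY f)
      _ = 1 := by rw [show (∑ x, (∑ y, p x y) * f x ^ 2) = 1 from h2, Real.sqrt_one]
  -- every element of S is ≤ v f for its witness f
  have hSle : ∀ r ∈ S, ∃ f : X → ℝ,
      (∑ x, (∑ y, p x y) * f x) = 0 ∧ (∑ x, (∑ y, p x y) * (f x) ^ 2) = 1 ∧ r ≤ v f := by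
    rintro r ⟨f, g, h1, h2, h3, h4, h5⟩
    refine ⟨f, by rwa [hEf] at h1, by rwa [hEf2] at h3, ?_⟩
    have hg2 : (∑ y, (∑ x, p x y) * (g y) ^ 2) = 1 := by rwa [hEg2] at h4
    have hr : r = ∑ y, (∑ x, p x y) * (cep p f y * g y) := by rw [h5, hEfg]
    have hcs := cs_weighted (fun y => ∑ x, p x y) (cep p f) g (fun y => (hY y).le)
    rw [hg2, mul_one] at hcs
    calc r ≤ |r| := le_abs_self r
      _ = Real.sqrt (r ^ 2) := (Real.sqrt_sq_eq_abs r).symm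
      _ ≤ v f := by
          rw [hv]
          refine Real.sqrt_le_sqrt ?_
          rw [hr]; exact hcs
  have hSbound : ∀ r ∈ S, r ≤ 1 := by
    intro r hr
    obtain ⟨f, h1, h2, h3⟩ := hSle r hr
    exact h3.trans (hv1 f h2)
  have hSbdd : BddAbove S := ⟨1, fun r hr => hSbound r hr⟩
  have hTbound : ∀ r ∈ T, r ≤ 1 := by
    rintro r ⟨f, h1, h2, h3⟩
    rw [h3]
    exact hv1 f h2
  have hTbdd : BddAbove T := ⟨1, fun r hr => hTbound r hr⟩
  -- nonnegativity of sSup S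
  have hS0 : 0 ≤ sSup S := by
    by_cases hne : S.Nonempty
    · obtain ⟨r, hr⟩ := hne
      obtain ⟨f, g, h1, h2, h3, h4, h5⟩ := hr
      have hneg : -r ∈ S := by
        refine ⟨f, fun y => -g y, h1, ?_, h3, ?_, ?_⟩
        · simp only [mul_neg, Finset.sum_neg_distrib]
          rw [h2, neg_zero]
        · simpa using h4
        · rw [h5]
          simp [Finset.sum_neg_distrib, mul_neg]
      rcases le_or_gt 0 r with h | h
      · exact h.trans (le_csSup hSbdd ⟨f, g, h1, h2, h3, h4, h5⟩)
      · have := le_csSup hSbdd hneg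
        linarith
    · rw [Set.not_nonempty_iff_eq_empty] at hne
      rw [hne, Real.sSup_empty]
  have hT0 : 0 ≤ sSup T := by
    by_cases hne : T.Nonempty
    · obtain ⟨r, hr⟩ := hne
      obtain ⟨f, h1, h2, h3⟩ := hr
      have : (0:ℝ) ≤ r := by rw [h3]; exact Real.sqrt_nonneg _
      exact this.trans (le_csSup hTbdd ⟨f, h1, h2, h3⟩)
    · rw [Set.not_nonempty_iff_eq_empty] at hne
      rw [hne, Real.sSup_empty]
  -- every element of T is ≤ sSup S
  have hTleS : ∀ r ∈ T, r ≤ sSup S := by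
    rintro r ⟨f, h1, h2, h3⟩
    have hrv : r = v f := h3
    set Q := ∑ y, (∑ x, p x y) * (cep p f y) ^ 2 with hQ
    rcases eq_or_lt_of_le (hQnonneg f) with hQ0 | hQpos
    · have hr0 : r = 0 := by
        rw [hrv]
        show Real.sqrt (∑ y, (∑ x, p x y) * (cep p f y) ^ 2) = 0
        rw [← hQ0, Real.sqrt_zero]
      rw [hr0]
      exact hS0
    · -- construct g
      have hvpos : 0 < v f := by
        rw [hv]; exact Real.sqrt_pos.mpr hQpos
      have hvsq : v f ^ 2 = Q := by
        rw [hv]; exact Real.sq_sqrt (hQnonneg f)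
      set g : Y → ℝ := fun y => cep p f y / v f with hg
      have hpYg : ∀ y, (∑ x, p x y) * g y = (∑ x, p x y * f x) / v f := by
        intro y
        rw [hg]
        rw [show (∑ x, p x y) * (cep p f y / v f) = ((∑ x, p x y) * cep p f y) / v f by ring,
          pY_mul_cep p hY f y]
      have c1 : (∑ x, ∑ y, p x y * f x) = 0 := by rw [hEf]; exact h1
      have c2 : (∑ x, ∑ y, p x y * g y) = 0 := by
        rw [hEg]
        have : (∑ y, (∑ x, p x y) * g y) = (∑ y, ∑ x, p x y * f x) / v f := by
          rw [Finset.sum_div]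
          exact Finset.sum_congr rfl fun y _ => hpYg y
        rw [this, Finset.sum_comm, hEf, h1, zero_div]
      have c3 : (∑ x, ∑ y, p x y * (f x) ^ 2) = 1 := by rw [hEf2]; exact h2
      have c4 : (∑ x, ∑ y, p x y * (g y) ^ 2) = 1 := by
        rw [hEg2]
        have : (∑ y, (∑ x, p x y) * (g y) ^ 2) = Q / v f ^ 2 := by
          rw [hQ, Finset.sum_div]
          refine Finset.sum_congr rfl fun y _ => ?_
          rw [hg]
          ring
        rw [this, hvsq, div_self (ne_of_gt hQpos)]
      have c5 : v f = ∑ x, ∑ y, p x y * f x * g y := by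
        rw [hEfg f g]
        have : (∑ y, (∑ x, p x y) * (cep p f y * g y)) = Q / v f := by
          rw [hQ, Finset.sum_div]
          refine Finset.sum_congr rfl fun y _ => ?_
          rw [hg]
          ring
        rw [this, ← hvsq, sq, mul_div_assoc, div_self (ne_of_gt hvpos), mul_one]
      have : v f ∈ S := ⟨f, g, c1, c2, c3, c4, c5⟩
      rw [hrv]
      exact le_csSup hSbdd this
  -- conclude
  apply le_antisymm
  · refine Real.sSup_le (fun r hr => ?_) hT0
    obtain ⟨f, h1, h2, h3⟩ := hSle r hr
    exact h3.trans (le_csSup hTbdd (hvT f h1 h2))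
  · exact Real.sSup_le hTleS hS0
end

section
/- For a binary additive stream cipher with message M uniform on {0,1}ⁿ, key K uniform on a finite key set 𝒦 independent of M, keystream generator g: 𝒦 → {0,1}ⁿ, and ciphertext C = M ⊕ g(K) (componentwise mod-2 addition), the maximal correlation is ρ_m(M;C) = max over nonzero v ∈ {0,1}ⁿ of | (1/|𝒦|) Σ_{k∈𝒦} (−1)^{⟨v, g(k)⟩} |, where ⟨v, g(k)⟩ = Σ_l v_l g_l(k). -/
open BigOperators Finset
open scoped Classical

namespace St10

noncomputable def chi (n : ℕ) (v x : Fin n → ZMod 2) : ℝ :=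
  if (∑ l, v l * x l) = 0 then 1 else -1

lemma zmod2_cases : ∀ a : ZMod 2, a = 0 ∨ a = 1 := by decide

lemma chi_mul_self (n : ℕ) (v x : Fin n → ZMod 2) : chi n v x * chi n v x = 1 := by
  unfold chi; split <;> norm_num

lemma chi_sq (n : ℕ) (v x : Fin n → ZMod 2) : chi n v x ^ 2 = 1 := by
  rw [sq]; exact chi_mul_self n v x

lemma chi_add_right (n : ℕ) (v x y : Fin n → ZMod 2) :
    chi n v (x + y) = chi n v x * chi n v y := by
  unfold chi
  have h : (∑ l, v l * (x + y) l) = (∑ l, v l * x l) + (∑ l, v l * y l) := by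
    rw [← Finset.sum_add_distrib]
    exact Finset.sum_congr rfl fun l _ => by simp [mul_add]
  rw [h]
  rcases zmod2_cases (∑ l, v l * x l) with h1 | h1 <;>
    rcases zmod2_cases (∑ l, v l * y l) with h2 | h2 <;>
      simp [h1, h2, show (1 : ZMod 2) + 1 = 0 by decide,
        show (1 : ZMod 2) ≠ 0 by decide] <;> norm_num

lemma chi_symm (n : ℕ) (v x : Fin n → ZMod 2) : chi n v x = chi n x v := by
  unfold chi
  rw [Finset.sum_congr rfl fun l _ => mul_comm (v l) (x l)]

lemma chi_zero (n : ℕ) (x : Fin n → ZMod 2) : chi n (0 : Fin n → ZMod 2) x = 1 := by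
  simp [chi]

lemma card_space (n : ℕ) : (Fintype.card (Fin n → ZMod 2) : ℝ) = 2 ^ n := by
  simp

lemma sum_chi (n : ℕ) (u : Fin n → ZMod 2) :
    ∑ x : Fin n → ZMod 2, chi n u x = if u = 0 then (2 ^ n : ℝ) else 0 := by
  split
  · next h =>
    subst h
    simp [chi_zero, Finset.card_univ]
  · next h =>
    obtain ⟨l₀, hl₀⟩ : ∃ l, u l ≠ 0 := by
      by_contra hc; push_neg at hc; exact h (funext hc)
    have hul : u l₀ = 1 := (zmod2_cases (u l₀)).resolve_left hl₀
    set δ : Fin n → ZMod 2 := fun l => if l = l₀ then 1 else 0 with hδ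
    have hkey : ∀ x, chi n u (x + δ) = - chi n u x := by
      intro x
      unfold chi
      have h1 : (∑ l, u l * (x + δ) l) = (∑ l, u l * x l) + 1 := by
        have : (∑ l, u l * (x + δ) l) = (∑ l, u l * x l) + ∑ l, u l * δ l := by
          rw [← Finset.sum_add_distrib]
          exact Finset.sum_congr rfl fun l _ => by simp [mul_add]
        rw [this]
        congr 1
        simp [hδ, mul_ite, Finset.sum_ite_eq', hul]
      rw [h1]
      rcases zmod2_cases (∑ l, u l * x l) with h2 | h2 <;>
        simp [h2, show (1 : ZMod 2) + 1 = 0 by decide,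
          show (1 : ZMod 2) ≠ 0 by decide] <;> norm_num
    have hS : ∑ x : Fin n → ZMod 2, chi n u x
        = ∑ x : Fin n → ZMod 2, chi n u (x + δ) := by
      exact (Equiv.sum_comp (Equiv.addRight δ) (chi n u)).symm
    have : ∑ x : Fin n → ZMod 2, chi n u x = - ∑ x : Fin n → ZMod 2, chi n u x := by
      nth_rewrite 1 [hS]
      rw [← Finset.sum_neg_distrib]
      exact Finset.sum_congr rfl fun x _ => hkey x
    linarith

lemma add_eq_zero_iff (n : ℕ) (x y : Fin n → ZMod 2) : x + y = 0 ↔ x = y := by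
  constructor
  · intro h
    funext l
    have := congrFun h l
    have h2 : ∀ a b : ZMod 2, a + b = 0 → a = b := by decide
    exact h2 _ _ this
  · rintro rfl
    funext l
    have h2 : ∀ a : ZMod 2, a + a = 0 := by decide
    exact h2 _

lemma sum_chi_fst (n : ℕ) (x y : Fin n → ZMod 2) :
    ∑ v : Fin n → ZMod 2, chi n v x * chi n v y = if x = y then (2 ^ n : ℝ) else 0 := by
  have h1 : ∀ v : Fin n → ZMod 2, chi n v x * chi n v y = chi n (x + y) v := by
    intro v
    rw [← chi_add_right n v x y]
    exact chi_symm n v (x + y)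
  calc ∑ v : Fin n → ZMod 2, chi n v x * chi n v y
      = ∑ v : Fin n → ZMod 2, chi n (x + y) v := Finset.sum_congr rfl fun v _ => h1 v
    _ = if x + y = 0 then (2 ^ n : ℝ) else 0 := sum_chi n (x + y)
    _ = if x = y then (2 ^ n : ℝ) else 0 := by simp [add_eq_zero_iff]

/-- Fourier coefficient. -/
noncomputable def fcoef (n : ℕ) (f : (Fin n → ZMod 2) → ℝ) (v : Fin n → ZMod 2) : ℝ :=
  (2 ^ n : ℝ)⁻¹ * ∑ x, f x * chi n v x

lemma inversion (n : ℕ) (f : (Fin n → ZMod 2) → ℝ) (x : Fin n → ZMod 2) :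
    ∑ v, fcoef n f v * chi n v x = f x := by
  unfold fcoef
  have h2 : (2 ^ n : ℝ) ≠ 0 := by positivity
  calc ∑ v, ((2 ^ n : ℝ)⁻¹ * ∑ y, f y * chi n v y) * chi n v x
      = (2 ^ n : ℝ)⁻¹ * ∑ v, ∑ y, f y * (chi n v y * chi n v x) := by
        rw [Finset.mul_sum]
        exact Finset.sum_congr rfl fun v _ => by
          rw [mul_assoc, Finset.sum_mul]
          congr 1
          exact Finset.sum_congr rfl fun y _ => by ring
    _ = (2 ^ n : ℝ)⁻¹ * ∑ y, f y * ∑ v, chi n v y * chi n v x := by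
        rw [Finset.sum_comm]
        congr 1
        exact Finset.sum_congr rfl fun y _ => by rw [Finset.mul_sum]
    _ = (2 ^ n : ℝ)⁻¹ * ∑ y, f y * (if y = x then (2 ^ n : ℝ) else 0) := by
        congr 1
        exact Finset.sum_congr rfl fun y _ => by rw [sum_chi_fst]
    _ = f x := by
        simp only [mul_ite, mul_zero, Finset.sum_ite_eq', Finset.mem_univ, if_true]
        field_simp

lemma plancherel (n : ℕ) (f : (Fin n → ZMod 2) → ℝ) :
    ∑ x, (f x) ^ 2 = (2 ^ n : ℝ) * ∑ v, (fcoef n f v) ^ 2 := by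
  have h : ∑ x, (f x) ^ 2 = ∑ x, (∑ v, fcoef n f v * chi n v x) * f x := by
    exact Finset.sum_congr rfl fun x _ => by rw [inversion]; ring
  rw [h]
  calc ∑ x, (∑ v, fcoef n f v * chi n v x) * f x
      = ∑ x, ∑ v, fcoef n f v * (f x * chi n v x) := by
        exact Finset.sum_congr rfl fun x _ => by
          rw [Finset.sum_mul]; exact Finset.sum_congr rfl fun v _ => by ring
    _ = ∑ v, fcoef n f v * ∑ x, f x * chi n v x := by
        rw [Finset.sum_comm]
        exact Finset.sum_congr rfl fun v _ => by rw [Finset.mul_sum]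
    _ = (2 ^ n : ℝ) * ∑ v, (fcoef n f v) ^ 2 := by
        rw [Finset.mul_sum]
        refine Finset.sum_congr rfl fun v _ => ?_
        have h2 : (2 ^ n : ℝ) ≠ 0 := by positivity
        have : (∑ x, f x * chi n v x) = (2 ^ n : ℝ) * fcoef n f v := by
          unfold fcoef; field_simp
        rw [this]
        unfold fcoef
        ring

lemma sum_p {K : Type*} [Fintype K] (n : ℕ) (g : K → (Fin n → ZMod 2))
    (F : (Fin n → ZMod 2) → (Fin n → ZMod 2) → ℝ) :
    (∑ m, ∑ c, ((2 ^ n : ℝ))⁻¹ * ((Fintype.card K : ℝ))⁻¹ *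
        ((univ.filter fun k => m + g k = c).card : ℝ) * F m c)
      = ((2 ^ n : ℝ))⁻¹ * ((Fintype.card K : ℝ))⁻¹ * ∑ k, ∑ m, F m (m + g k) := by
  have key : ∀ m, (∑ c, ((univ.filter fun k => m + g k = c).card : ℝ) * F m c)
      = ∑ k, F m (m + g k) := by
    intro m
    have h1 : ∀ c, ((univ.filter fun k => m + g k = c).card : ℝ)
        = ∑ k, if m + g k = c then (1 : ℝ) else 0 := by
      intro c
      rw [Finset.card_filter]
      push_cast
      rfl
    calc (∑ c, ((univ.filter fun k => m + g k = c).card : ℝ) * F m c)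
        = ∑ c, ∑ k, (if m + g k = c then F m c else 0) := by
          refine Finset.sum_congr rfl fun c _ => ?_
          rw [h1, Finset.sum_mul]
          exact Finset.sum_congr rfl fun k _ => by split <;> simp
      _ = ∑ k, ∑ c, (if m + g k = c then F m c else 0) := Finset.sum_comm
      _ = ∑ k, F m (m + g k) := by
          refine Finset.sum_congr rfl fun k _ => ?_
          have : (∑ c, if m + g k = c then F m c else 0)
              = ∑ c, if c = m + g k then F m c else 0 := by
            exact Finset.sum_congr rfl fun c _ => by
              simp only [eq_comm]
          rw [this, Finset.sum_ite_eq' univ (m + g k) (F m)]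
          simp
  calc (∑ m, ∑ c, ((2 ^ n : ℝ))⁻¹ * ((Fintype.card K : ℝ))⁻¹ *
        ((univ.filter fun k => m + g k = c).card : ℝ) * F m c)
      = ((2 ^ n : ℝ))⁻¹ * ((Fintype.card K : ℝ))⁻¹ *
          ∑ m, ∑ c, ((univ.filter fun k => m + g k = c).card : ℝ) * F m c := by
        simp_rw [Finset.mul_sum]
        exact Finset.sum_congr rfl fun m _ => Finset.sum_congr rfl fun c _ => by ring
    _ = ((2 ^ n : ℝ))⁻¹ * ((Fintype.card K : ℝ))⁻¹ * ∑ m, ∑ k, F m (m + g k) := by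
        rw [Finset.sum_congr rfl fun m _ => key m]
    _ = ((2 ^ n : ℝ))⁻¹ * ((Fintype.card K : ℝ))⁻¹ * ∑ k, ∑ m, F m (m + g k) := by
        rw [Finset.sum_comm]

end St10

namespace St10

lemma sum_p' {K : Type*} [Fintype K] (n : ℕ) (g : K → (Fin n → ZMod 2))
    (f gg : (Fin n → ZMod 2) → ℝ) :
    (∑ m, ∑ c, ((2 ^ n : ℝ))⁻¹ * ((Fintype.card K : ℝ))⁻¹ *
        ((univ.filter fun k => m + g k = c).card : ℝ) * f m * gg c)
      = ((2 ^ n : ℝ))⁻¹ * ((Fintype.card K : ℝ))⁻¹ * ∑ k, ∑ m, f m * gg (m + g k) := by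
  refine Eq.trans ?_ (sum_p n g (fun m c => f m * gg c))
  exact Finset.sum_congr rfl fun m _ => Finset.sum_congr rfl fun c _ => mul_assoc _ _ _

end St10

set_option maxHeartbeats 2000000 in
theorem stmt10 (n : ℕ) (hn : 1 ≤ n) {K : Type*} [Fintype K] [Nonempty K]
    (g : K → (Fin n → ZMod 2)) :
    maxCorr (fun (m c : Fin n → ZMod 2) =>
        ((2 ^ n : ℝ))⁻¹ * ((Fintype.card K : ℝ))⁻¹ *
          ((univ.filter fun k => m + g k = c).card : ℝ)) =
    sSup {r : ℝ | ∃ v : Fin n → ZMod 2, v ≠ 0 ∧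
      r = |((Fintype.card K : ℝ))⁻¹ *
        ∑ k, (if (∑ l, v l * g k l) = 0 then (1 : ℝ) else -1)|} := by
  classical
  have hKne : ((Fintype.card K : ℝ)) ≠ 0 := by
    have := Fintype.card_pos (α := K)
    positivity
  have h2ne : ((2 : ℝ) ^ n) ≠ 0 := by positivity
  set Q : (Fin n → ZMod 2) → ℝ :=
    fun v => ((Fintype.card K : ℝ))⁻¹ * ∑ k, St10.chi n v (g k) with hQ
  have hchif : ∀ (v : Fin n → ZMod 2) (k : K),
      (if (∑ l, v l * g k l) = 0 then (1 : ℝ) else -1) = St10.chi n v (g k) := fun v k => rfl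
  -- the candidate maximum
  set T : Finset (Fin n → ZMod 2) := univ.filter (fun v => v ≠ 0) with hT
  have hTne : T.Nonempty := by
    refine ⟨fun _ => 1, ?_⟩
    rw [hT, Finset.mem_filter]
    refine ⟨Finset.mem_univ _, fun h => ?_⟩
    have := congrFun h ⟨0, hn⟩
    exact (by decide : (1 : ZMod 2) ≠ 0) this
  set M : ℝ := T.sup' hTne (fun v => |Q v|) with hM
  obtain ⟨vs, hvsT, hvs⟩ := T.exists_mem_eq_sup' hTne (fun v => |Q v|)
  have hvs0 : vs ≠ 0 := (Finset.mem_filter.mp hvsT).2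
  have hMvs : M = |Q vs| := hvs
  have hMnonneg : 0 ≤ M := hMvs ▸ abs_nonneg _
  have hub : ∀ v : Fin n → ZMod 2, v ≠ 0 → |Q v| ≤ M := by
    intro v hv
    have hvT : v ∈ T := by rw [hT]; exact Finset.mem_filter.mpr ⟨Finset.mem_univ v, hv⟩
    rw [hM]
    exact Finset.le_sup' (fun u => |Q u|) hvT
  -- RHS sup equals M
  have hG2 : sSup {r : ℝ | ∃ v : Fin n → ZMod 2, v ≠ 0 ∧
      r = |((Fintype.card K : ℝ))⁻¹ *
        ∑ k, (if (∑ l, v l * g k l) = 0 then (1 : ℝ) else -1)|} = M := by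
    refine IsGreatest.csSup_eq ⟨⟨vs, hvs0, ?_⟩, ?_⟩
    · simp only [hchif]
      exact hMvs
    · rintro r ⟨v, hv, hr⟩
      simp only [hchif] at hr
      exact hr ▸ hub v hv
  -- shift invariance of sums
  have hshift : ∀ (h : (Fin n → ZMod 2) → ℝ) (a : Fin n → ZMod 2),
      (∑ m, h (m + a)) = ∑ m, h m := fun h a => Equiv.sum_comp (Equiv.addRight a) h
  have hsum0 : (∑ m : Fin n → ZMod 2, St10.chi n vs m) = 0 := by
    rw [St10.sum_chi]
    simp [hvs0]
  have hcardP : ((Fintype.card (Fin n → ZMod 2) : ℝ)) = 2 ^ n := St10.card_space n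
  -- LHS sup equals M
  have hG1 : maxCorr (fun (m c : Fin n → ZMod 2) =>
      ((2 ^ n : ℝ))⁻¹ * ((Fintype.card K : ℝ))⁻¹ *
        ((univ.filter fun k => m + g k = c).card : ℝ)) = M := by
    rw [maxCorr]
    refine IsGreatest.csSup_eq ⟨?_, ?_⟩
    · -- membership: the maximum is attained
      set ε : ℝ := if 0 ≤ Q vs then 1 else -1 with hε
      have hε2 : ε * ε = 1 := by rw [hε]; split <;> norm_num
      have hεQ : ε * Q vs = |Q vs| := by
        rw [hε]
        split
        · next h => rw [abs_of_nonneg h]; ring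
        · next h => rw [abs_of_neg (lt_of_not_ge h)]; ring
      refine ⟨St10.chi n vs, fun c => ε * St10.chi n vs c, ?_, ?_, ?_, ?_, ?_⟩
      · refine (St10.sum_p n g (fun m _ => St10.chi n vs m)).trans ?_
        simp [hsum0]
      · refine (St10.sum_p n g (fun _ c => ε * St10.chi n vs c)).trans ?_
        have : ∀ k : K, (∑ m, ε * St10.chi n vs (m + g k)) = 0 := by
          intro k
          rw [hshift (fun c => ε * St10.chi n vs c) (g k), ← Finset.mul_sum, hsum0, mul_zero]
        rw [Finset.sum_congr rfl fun k _ => this k]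
        simp
      · refine (St10.sum_p n g (fun m _ => (St10.chi n vs m) ^ 2)).trans ?_
        have : ∀ k : K, (∑ m, (St10.chi n vs m) ^ 2) = (2 : ℝ) ^ n := by
          intro k
          rw [Finset.sum_congr rfl fun m _ => St10.chi_sq n vs m, Finset.sum_const,
            Finset.card_univ, nsmul_eq_mul, mul_one, hcardP]
        rw [Finset.sum_congr rfl fun k _ => this k, Finset.sum_const, Finset.card_univ,
          nsmul_eq_mul]
        field_simp
      · refine (St10.sum_p n g (fun _ c => (ε * St10.chi n vs c) ^ 2)).trans ?_
        have : ∀ k : K, (∑ m, (ε * St10.chi n vs (m + g k)) ^ 2) = (2 : ℝ) ^ n := by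
          intro k
          rw [hshift (fun c => (ε * St10.chi n vs c) ^ 2) (g k)]
          have : ∀ m, (ε * St10.chi n vs m) ^ 2 = 1 := by
            intro m
            have h1 := St10.chi_mul_self n vs m
            linear_combination ε * ε * h1 + hε2
          rw [Finset.sum_congr rfl fun m _ => this m, Finset.sum_const, Finset.card_univ,
            nsmul_eq_mul, mul_one, hcardP]
        rw [Finset.sum_congr rfl fun k _ => this k, Finset.sum_const, Finset.card_univ,
          nsmul_eq_mul]
        field_simp
      · -- the value
        refine Eq.symm ((St10.sum_p' n g (St10.chi n vs) (fun c => ε * St10.chi n vs c)).trans ?_)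
        have hterm : ∀ k : K, (∑ m, St10.chi n vs m * (ε * St10.chi n vs (m + g k)))
            = (2 : ℝ) ^ n * (ε * St10.chi n vs (g k)) := by
          intro k
          have hpt : ∀ m, St10.chi n vs m * (ε * St10.chi n vs (m + g k))
              = ε * St10.chi n vs (g k) := by
            intro m
            rw [St10.chi_add_right n vs m (g k)]
            have h1 := St10.chi_mul_self n vs m
            linear_combination (ε * St10.chi n vs (g k)) * h1
          rw [Finset.sum_congr rfl fun m _ => hpt m, Finset.sum_const, Finset.card_univ,
            nsmul_eq_mul, hcardP]
        rw [Finset.sum_congr rfl fun k _ => hterm k]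
        rw [show (∑ k : K, (2:ℝ) ^ n * (ε * St10.chi n vs (g k)))
            = (2:ℝ) ^ n * ε * ∑ k : K, St10.chi n vs (g k) from by
          rw [Finset.mul_sum]; exact Finset.sum_congr rfl fun k _ => by ring]
        rw [hMvs, ← hεQ, hQ]
        field_simp
    · -- upper bound
      rintro r ⟨f, gg, h1, h2c, h3, h4, h5⟩
      set fh : (Fin n → ZMod 2) → ℝ := St10.fcoef n f with hfh
      set gh : (Fin n → ZMod 2) → ℝ := St10.fcoef n gg with hgh
      -- mean zero for f
      have hf0 : (∑ m, f m) = 0 := by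
        have h := (St10.sum_p n g (fun m _ => f m)).symm.trans h1
        rw [Finset.sum_const, Finset.card_univ, nsmul_eq_mul] at h
        have h' := mul_eq_zero.mp h
        rcases h' with h' | h'
        · exact absurd h' (by positivity)
        · rcases mul_eq_zero.mp h' with h'' | h''
          · exact absurd h'' hKne
          · exact h''
      -- second moment for f
      have hf2 : (∑ m, (f m) ^ 2) = 2 ^ n := by
        have h := (St10.sum_p n g (fun m _ => (f m) ^ 2)).symm.trans h3
        rw [Finset.sum_const, Finset.card_univ, nsmul_eq_mul] at h
        field_simp at h
        exact h
      -- mean zero and second moment for gg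
      have hg0 : (∑ m, gg m) = 0 := by
        have h := (St10.sum_p n g (fun _ c => gg c)).symm.trans h2c
        have h2 : (∑ k : K, ∑ m, gg (m + g k)) = (Fintype.card K : ℝ) * ∑ m, gg m := by
          rw [Finset.sum_congr rfl fun k _ => hshift gg (g k), Finset.sum_const,
            Finset.card_univ, nsmul_eq_mul]
        rw [h2] at h
        rcases mul_eq_zero.mp h with h' | h'
        · exact absurd h' (by positivity)
        · rcases mul_eq_zero.mp h' with h'' | h''
          · exact absurd h'' hKne
          · exact h''
      have hg2 : (∑ m, (gg m) ^ 2) = 2 ^ n := by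
        have h := (St10.sum_p n g (fun _ c => (gg c) ^ 2)).symm.trans h4
        have h2 : (∑ k : K, ∑ m, (gg (m + g k)) ^ 2)
            = (Fintype.card K : ℝ) * ∑ m, (gg m) ^ 2 := by
          rw [Finset.sum_congr rfl fun k _ => hshift (fun c => (gg c) ^ 2) (g k),
            Finset.sum_const, Finset.card_univ, nsmul_eq_mul]
        rw [h2] at h
        field_simp at h
        exact h
      -- Fourier facts
      have hfh0 : fh 0 = 0 := by
        rw [hfh]
        unfold St10.fcoef
        rw [Finset.sum_congr rfl fun x _ => by rw [St10.chi_zero, mul_one], hf0, mul_zero]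
      have hfh2 : (∑ w, (fh w) ^ 2) = 1 := by
        have := St10.plancherel n f
        rw [hf2] at this
        have h2 : ((2:ℝ) ^ n) * 1 = 2 ^ n * ∑ v, (St10.fcoef n f v) ^ 2 := by
          rw [mul_one]; exact this
        rw [hfh]
        exact (mul_left_cancel₀ h2ne h2).symm
      have hgh2 : (∑ w, (gh w) ^ 2) = 1 := by
        have := St10.plancherel n gg
        rw [hg2] at this
        have h2 : ((2:ℝ) ^ n) * 1 = 2 ^ n * ∑ v, (St10.fcoef n gg v) ^ 2 := by
          rw [mul_one]; exact this
        rw [hgh]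
        exact (mul_left_cancel₀ h2ne h2).symm
      -- the value of r in Fourier coordinates
      have hr : r = ∑ w, fh w * gh w * Q w := by
        rw [h5]
        refine (St10.sum_p' n g f gg).trans ?_
        have inner : ∀ k : K, (∑ m, f m * gg (m + g k))
            = ∑ w, (2:ℝ) ^ n * (fh w * gh w * St10.chi n w (g k)) := by
          intro k
          calc (∑ m, f m * gg (m + g k))
              = ∑ m, f m * ∑ w, gh w * (St10.chi n w m * St10.chi n w (g k)) := by
                refine Finset.sum_congr rfl fun m _ => ?_
                congr 1
                rw [← St10.inversion n gg (m + g k)]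
                exact Finset.sum_congr rfl fun w _ => by
                  rw [St10.chi_add_right n w m (g k)]
            _ = ∑ w, (∑ m, f m * St10.chi n w m) * (gh w * St10.chi n w (g k)) := by
                simp_rw [Finset.mul_sum]
                rw [Finset.sum_comm]
                refine Finset.sum_congr rfl fun w _ => ?_
                rw [Finset.sum_mul]
                exact Finset.sum_congr rfl fun m _ => by ring
            _ = ∑ w, (2:ℝ) ^ n * (fh w * gh w * St10.chi n w (g k)) := by
                refine Finset.sum_congr rfl fun w _ => ?_
                have hfw : (∑ m, f m * St10.chi n w m) = (2:ℝ) ^ n * fh w := by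
                  rw [hfh]
                  unfold St10.fcoef
                  field_simp
                rw [hfw]
                ring
        rw [Finset.sum_congr rfl fun k _ => inner k, Finset.sum_comm]
        rw [Finset.mul_sum]
        refine Finset.sum_congr rfl fun w _ => ?_
        rw [Finset.sum_congr rfl fun k _ => (by ring :
          (2:ℝ) ^ n * (fh w * gh w * St10.chi n w (g k))
            = ((2:ℝ) ^ n * (fh w * gh w)) * St10.chi n w (g k)),
          ← Finset.mul_sum]
        rw [hQ]
        field_simp
      -- bound each term
      have habs : ∀ w, fh w * gh w * Q w ≤ M * (|fh w| * |gh w|) := by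
        intro w
        by_cases hw : w = 0
        · subst hw
          rw [hfh0]
          simp only [zero_mul, abs_zero]
          positivity
        · calc fh w * gh w * Q w ≤ |fh w * gh w * Q w| := le_abs_self _
            _ = |fh w| * |gh w| * |Q w| := by rw [abs_mul, abs_mul]
            _ ≤ |fh w| * |gh w| * M :=
                mul_le_mul_of_nonneg_left (hub w hw) (by positivity)
            _ = M * (|fh w| * |gh w|) := by ring
      have hCS : (∑ w, |fh w| * |gh w|) ≤ 1 := by
        have h1 := Finset.sum_mul_sq_le_sq_mul_sq univ (fun w => |fh w|) (fun w => |gh w|)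
        simp only [sq_abs] at h1
        rw [hfh2, hgh2, mul_one] at h1
        have hnn : 0 ≤ ∑ w, |fh w| * |gh w| :=
          Finset.sum_nonneg fun w _ => by positivity
        nlinarith
      calc r = ∑ w, fh w * gh w * Q w := hr
        _ ≤ ∑ w, M * (|fh w| * |gh w|) := Finset.sum_le_sum fun w _ => habs w
        _ = M * ∑ w, |fh w| * |gh w| := by rw [Finset.mul_sum]
        _ ≤ M * 1 := mul_le_mul_of_nonneg_left hCS hMnonneg
        _ = M := mul_one M
  rw [hG1, hG2]
end
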